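/- arXiv:2301.01367 — 6 statements merged into one kernel-verified Lean document; each statement's English description precedes it below -/
import Mathlib

section
/- For the symmetric one-sided allocation problem, the pure price of anarchy of any unit-sum fair mechanism is Ω(√n). Precisely: let n ≥ 4 be a perfect square, m = n, and ε ∈ (0, 1/n³]. Partition the agents into √n blocks of √n consecutive agents each, and define the unit-sum profile v by: agent i has value 1/n + ε for item b(i) (where b(i) = ⌈i/√n⌉ ∈ {1,…,√n} is its block index) and value 1/n − ε/(n−1) for every other item. Let M be any fair mechanism and let s be a profile that is a pure Nash equilibrium of M with respect to true valuations v. Then there exists a unit-sum profile v̄ — agreeing with v except that for each j ∈ {1,…,√n} one agent i_j of block j has v̄_{i_j}(j) = 1 and v̄_{i_j}(ℓ) = 0 for ℓ ≠ j — such that s is also a pure Nash equilibrium of M with respect to v̄, OPT(v̄) ≥ √n, and the social welfare of s under v̄ is at most 3. In particular the pure price of anarchy of every unit-sum fair mechanism is at least √n/3. -/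
noncomputable section

/-- A unit-sum valuation on `m` items: nonnegative values summing to `1`. -/
def IsUnitSum {m : ℕ} (w : Fin m → ℝ) : Prop :=
  (∀ j, 0 ≤ w j) ∧ ∑ j, w j = 1

/-- `p` is a randomized direct-revelation mechanism: on every unit-sum reported profile it
returns nonnegative allocation probabilities, each item being fully allocated. -/
def IsMechanism (n m : ℕ) (p : (Fin n → Fin m → ℝ) → Fin n → Fin m → ℝ) : Prop :=
  ∀ v : Fin n → Fin m → ℝ, (∀ i, IsUnitSum (v i)) →
    (∀ i j, 0 ≤ p v i j) ∧ (∀ j, ∑ i, p v i j = 1)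

/-- The mechanism is fair: every agent receives `m/n` items in expectation. -/
def IsFair (n m : ℕ) (p : (Fin n → Fin m → ℝ) → Fin n → Fin m → ℝ) : Prop :=
  ∀ v : Fin n → Fin m → ℝ, (∀ i, IsUnitSum (v i)) →
    ∀ i, ∑ j, p v i j = (m : ℝ) / (n : ℝ)

/-- Agent `i`'s expected payoff under true valuations `v'` when the profile `v` is
reported to the mechanism `p`. -/
def Mpayoff {n m : ℕ} (p : (Fin n → Fin m → ℝ) → Fin n → Fin m → ℝ)
    (v' v : Fin n → Fin m → ℝ) (i : Fin n) : ℝ :=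
  ∑ j, p v i j * v' i j

/-- The unit-sum reported profile `v` is a pure Nash equilibrium of the mechanism `p` with
respect to the true valuations `v'`. -/
def IsMNash {n m : ℕ} (p : (Fin n → Fin m → ℝ) → Fin n → Fin m → ℝ)
    (v' v : Fin n → Fin m → ℝ) : Prop :=
  (∀ i, IsUnitSum (v i)) ∧
  ∀ (i : Fin n) (w : Fin m → ℝ), IsUnitSum w →
    Mpayoff p v' (Function.update v i w) i ≤ Mpayoff p v' v i

private lemma sum_ite_val_eq {n : ℕ} (c : Fin n) (a b : ℝ) :
    ∑ ℓ : Fin n, (if (ℓ : ℕ) = (c : ℕ) then a else b) = a + ((n : ℝ) - 1) * b := by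
  have h1 : ∀ ℓ : Fin n, (if (ℓ : ℕ) = (c : ℕ) then a else b)
      = b + (if ℓ = c then a - b else 0) := by
    intro ℓ
    by_cases h : ℓ = c
    · simp [h]
    · have h' : (ℓ : ℕ) ≠ (c : ℕ) := fun hh => h (Fin.ext hh)
      simp [h, h']
  rw [Finset.sum_congr rfl fun ℓ _ => h1 ℓ, Finset.sum_add_distrib,
    Finset.sum_const, Finset.sum_ite_eq']
  simp [Finset.card_univ]
  ring

private lemma sum_mul_ite_val {n : ℕ} (c : Fin n) (f : Fin n → ℝ) :
    ∑ ℓ : Fin n, f ℓ * (if (ℓ : ℕ) = (c : ℕ) then (1:ℝ) else 0) = f c := by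
  have h1 : ∀ ℓ : Fin n, f ℓ * (if (ℓ : ℕ) = (c : ℕ) then (1:ℝ) else 0)
      = if ℓ = c then f ℓ else 0 := by
    intro ℓ
    by_cases h : ℓ = c
    · simp [h]
    · have h' : (ℓ : ℕ) ≠ (c : ℕ) := fun hh => h (Fin.ext hh)
      simp [h, h']
  rw [Finset.sum_congr rfl fun ℓ _ => h1 ℓ, Finset.sum_ite_eq']
  simp

/-- **The pure price of anarchy of any unit-sum fair mechanism is `Ω(√n)`.**
With `n = r²` agents and items (`r ≥ 2`), `ε ∈ (0, 1/n³]`, and the block valuations `v`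
(agent `i` values the item indexed by its block `⌊i/r⌋` at `1/n + ε` and every other item
at `1/n − ε/(n−1)`), every pure Nash equilibrium `s` of a fair mechanism `p` with respect
to `v` is also a pure Nash equilibrium with respect to a profile `v̄` — agreeing with `v`
except that for each block `j` one agent `pick j` of block `j` values item `j` at `1` and
everything else at `0` — whose optimal welfare is at least `√n = r` but under which `s`
has social welfare at most `3`. -/
theorem fair_mechanism_poa_lower (r : ℕ) (hr : 2 ≤ r)
    (ε : ℝ) (hε0 : 0 < ε) (hε1 : ε ≤ 1 / ((r : ℝ) ^ 2) ^ 3)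
    (p : (Fin (r ^ 2) → Fin (r ^ 2) → ℝ) → Fin (r ^ 2) → Fin (r ^ 2) → ℝ)
    (hmech : IsMechanism (r ^ 2) (r ^ 2) p) (hfair : IsFair (r ^ 2) (r ^ 2) p)
    (v : Fin (r ^ 2) → Fin (r ^ 2) → ℝ)
    (hv : ∀ i j, v i j =
      if (j : ℕ) = (i : ℕ) / r then 1 / (r : ℝ) ^ 2 + ε
      else 1 / (r : ℝ) ^ 2 - ε / ((r : ℝ) ^ 2 - 1))
    (s : Fin (r ^ 2) → Fin (r ^ 2) → ℝ)
    (hNE : IsMNash p v s) :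
    ∃ (vb : Fin (r ^ 2) → Fin (r ^ 2) → ℝ) (pick : Fin r → Fin (r ^ 2)),
      (∀ i, IsUnitSum (vb i)) ∧
      (∀ j : Fin r, ((pick j : ℕ)) / r = (j : ℕ)) ∧
      (∀ (j : Fin r) (ℓ : Fin (r ^ 2)),
        vb (pick j) ℓ = if (ℓ : ℕ) = (j : ℕ) then 1 else 0) ∧
      (∀ i, (∀ j, i ≠ pick j) → vb i = v i) ∧
      IsMNash p vb s ∧
      (r : ℝ) ≤ (∑ j, ⨆ i, vb i j) ∧
      ∑ i, Mpayoff p vb s i ≤ 3 := by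
  classical
  have hr1 : 0 < r := by omega
  have hrR : (2:ℝ) ≤ (r:ℝ) := by exact_mod_cast hr
  have hrpos : (0:ℝ) < (r:ℝ) := by linarith
  set N : ℝ := (r:ℝ)^2 with hNdef
  have hN4 : (4:ℝ) ≤ N := by nlinarith
  have hN0 : (0:ℝ) < N := by nlinarith
  have hN1 : (0:ℝ) < N - 1 := by nlinarith
  have hcast : ((r^2 : ℕ) : ℝ) = N := by push_cast; ring
  set a : ℝ := 1/N + ε with hadef
  set b : ℝ := 1/N - ε/(N-1) with hbdef
  have ha0 : 0 ≤ a := by positivity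
  have hb0 : 0 ≤ b := by
    rw [hbdef, sub_nonneg, div_le_div_iff₀ hN1 hN0]
    have h3 : (0:ℝ) < N^3 := by positivity
    have h4 : ε * N^3 ≤ 1 := by
      have := (le_div_iff₀ h3).mp hε1
      linarith
    have hNN : N ≤ N^3 := by nlinarith [mul_pos (mul_pos hN0 hN1) (by linarith : (0:ℝ) < N + 1)]
    have h5 : ε * N ≤ ε * N^3 := mul_le_mul_of_nonneg_left hNN hε0.le
    linarith
  have habdiff : a - b = ε + ε/(N-1) := by rw [hadef, hbdef]; ring
  have hab : 0 < a - b := by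
    rw [habdiff]; positivity
  -- block item of an agent
  have hdivlt : ∀ i : Fin (r^2), (i:ℕ)/r < r^2 := by
    intro i
    have h1 : (i:ℕ) < r * r := by rw [← pow_two]; exact i.isLt
    have h2 : (i:ℕ)/r < r := Nat.div_lt_of_lt_mul h1
    exact lt_of_lt_of_le h2 (Nat.le_self_pow (by norm_num) r)
  set blk : Fin (r^2) → Fin (r^2) := fun i => ⟨(i:ℕ)/r, hdivlt i⟩ with hblkdef
  set itm : Fin r → Fin (r^2) := fun j =>
    ⟨(j:ℕ), lt_of_lt_of_le j.isLt (Nat.le_self_pow (by norm_num) r)⟩ with hitmdef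
  have hblkval : ∀ i, ((blk i : Fin (r^2)) : ℕ) = (i:ℕ)/r := fun _ => rfl
  have hitmval : ∀ j, ((itm j : Fin (r^2)) : ℕ) = (j:ℕ) := fun _ => rfl
  have hvform : ∀ i ℓ, v i ℓ = if (ℓ:ℕ) = ((blk i : Fin (r^2)):ℕ) then a else b := by
    intro i ℓ; rw [hv i ℓ]
  have hva : ∀ i ℓ, v i ℓ ≤ a := by
    intro i ℓ; rw [hvform]; split_ifs
    · exact le_rfl
    · linarith
  have hvunit : ∀ i, IsUnitSum (v i) := by
    intro i
    constructor
    · intro ℓ; rw [hvform]; split_ifs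
      · exact ha0
      · exact hb0
    · rw [Finset.sum_congr rfl fun ℓ _ => hvform i ℓ, sum_ite_val_eq (blk i) a b, hcast,
        hadef, hbdef]
      field_simp
      ring
  -- fairness : each agent gets total mass one
  have hone : ∀ u : Fin (r^2) → Fin (r^2) → ℝ, (∀ k, IsUnitSum (u k)) →
      ∀ i, ∑ ℓ, p u i ℓ = 1 := by
    intro u hu i
    rw [hfair u hu i, hcast, div_self (ne_of_gt hN0)]
  have hsu : ∀ k, IsUnitSum (s k) := hNE.1
  have hupd : ∀ (i : Fin (r^2)) (w : Fin (r^2) → ℝ), IsUnitSum w →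
      ∀ k, IsUnitSum (Function.update s i w k) := by
    intro i w hw k
    rcases eq_or_ne k i with h | h
    · subst h; simpa using hw
    · rw [Function.update_of_ne h]; exact hsu k
  -- payoff formula under v
  have hpayv : ∀ u, (∀ k, IsUnitSum (u k)) → ∀ i,
      Mpayoff p v u i = b + (a-b) * p u i (blk i) := by
    intro u hu i
    unfold Mpayoff
    have h1 : ∀ ℓ, p u i ℓ * v i ℓ
        = b * p u i ℓ + (if ℓ = blk i then (a-b) * p u i ℓ else 0) := by
      intro ℓ; rw [hvform i ℓ]
      by_cases h : ℓ = blk i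
      · have h' : (ℓ:ℕ) = ((blk i : Fin (r^2)):ℕ) := by rw [h]
        simp only [h, h', if_true, if_pos]; ring
      · have h' : (ℓ:ℕ) ≠ ((blk i : Fin (r^2)):ℕ) := fun hh => h (Fin.ext hh)
        simp [h, h', mul_comm]
    rw [Finset.sum_congr rfl fun ℓ _ => h1 ℓ, Finset.sum_add_distrib, ← Finset.mul_sum,
      Finset.sum_ite_eq', hone u hu i]
    simp
  -- deviations cannot increase the probability of the block item
  have hMono : ∀ (i : Fin (r^2)) (w : Fin (r^2) → ℝ), IsUnitSum w →
      p (Function.update s i w) i (blk i) ≤ p s i (blk i) := by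
    intro i w hw
    have h := hNE.2 i w hw
    rw [hpayv _ (hupd i w hw) i, hpayv s hsu i] at h
    have h2 := (add_le_add_iff_left b).mp h
    exact le_of_mul_le_mul_left h2 hab
  -- agents of each block, and picking the min-probability one
  have hemb_lt : ∀ (j : Fin r) (k : Fin r), r * (j:ℕ) + (k:ℕ) < r^2 := by
    intro j k
    have h1 : r * (j:ℕ) + (k:ℕ) < r * ((j:ℕ)+1) := by
      rw [Nat.mul_add, Nat.mul_one]; exact Nat.add_lt_add_left k.isLt _
    have h2 : r * ((j:ℕ)+1) ≤ r * r := Nat.mul_le_mul_left r j.isLt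
    have h3 : r * r = r^2 := (pow_two r).symm
    omega
  set emb : Fin r → Fin r → Fin (r^2) := fun j k => ⟨r * (j:ℕ) + (k:ℕ), hemb_lt j k⟩
    with hembdef
  have hemb_div : ∀ j k, ((emb j k : Fin (r^2)) : ℕ) / r = (j:ℕ) := by
    intro j k
    show (r * (j:ℕ) + (k:ℕ)) / r = (j:ℕ)
    rw [Nat.mul_add_div hr1, Nat.div_eq_of_lt k.isLt, Nat.add_zero]
  have hex : ∀ j : Fin r, ∃ k : Fin r, ∀ k',
      p s (emb j k) (itm j) ≤ p s (emb j k') (itm j) := by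
    intro j
    obtain ⟨k0, -, hk0⟩ := Finset.exists_min_image Finset.univ
      (fun k => p s (emb j k) (itm j)) ⟨⟨0, hr1⟩, Finset.mem_univ _⟩
    exact ⟨k0, fun k' => hk0 k' (Finset.mem_univ _)⟩
  choose kmin hkmin using hex
  set pick : Fin r → Fin (r^2) := fun j => emb j (kmin j) with hpickdef
  have hpickdiv : ∀ j : Fin r, ((pick j : Fin (r^2)) : ℕ)/r = (j:ℕ) :=
    fun j => hemb_div j (kmin j)
  have hpickinj : Function.Injective pick := by
    intro j1 j2 h
    have h1 := hpickdiv j1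
    rw [h, hpickdiv j2] at h1
    exact Fin.ext h1.symm
  have hp0 : ∀ i ℓ, 0 ≤ p s i ℓ := (hmech s hsu).1
  have hpsum1 : ∀ ℓ, ∑ i, p s i ℓ = 1 := (hmech s hsu).2
  have hmin : ∀ j : Fin r, p s (pick j) (itm j) ≤ 1/(r:ℝ) := by
    intro j
    have hinj : Function.Injective (emb j) := by
      intro k1 k2 h
      have h1 : r * (j:ℕ) + (k1:ℕ) = r * (j:ℕ) + (k2:ℕ) := congrArg Fin.val h
      exact Fin.ext (by omega)
    have h1 : (r:ℝ) * p s (pick j) (itm j) ≤ ∑ k : Fin r, p s (emb j k) (itm j) := by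
      calc (r:ℝ) * p s (pick j) (itm j)
          = ∑ _k : Fin r, p s (pick j) (itm j) := by
            rw [Finset.sum_const, Finset.card_univ, Fintype.card_fin, nsmul_eq_mul]
        _ ≤ ∑ k : Fin r, p s (emb j k) (itm j) :=
            Finset.sum_le_sum fun k _ => hkmin j k
    have h2 : ∑ k : Fin r, p s (emb j k) (itm j) ≤ ∑ i, p s i (itm j) := by
      have himg := Finset.sum_image (s := Finset.univ) (g := emb j)
        (f := fun i => p s i (itm j)) (fun x _ y _ h => hinj h)
      rw [← himg]
      exact Finset.sum_le_sum_of_subset_of_nonneg (Finset.subset_univ _)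
        (fun i _ _ => hp0 i _)
    have h3 : (r:ℝ) * p s (pick j) (itm j) ≤ 1 := by
      rw [← hpsum1 (itm j)]; exact le_trans h1 h2
    rw [le_div_iff₀ hrpos, mul_comm]
    exact h3
  -- the deviant profile vb
  set vb : Fin (r^2) → Fin (r^2) → ℝ := fun i ℓ =>
    if ∃ j : Fin r, i = pick j then (if (ℓ:ℕ) = (i:ℕ)/r then 1 else 0) else v i ℓ
    with hvbdef
  have hvb_pick : ∀ (j : Fin r) (ℓ : Fin (r^2)),
      vb (pick j) ℓ = if (ℓ:ℕ) = (j:ℕ) then 1 else 0 := by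
    intro j ℓ
    show (if ∃ j' : Fin r, pick j = pick j' then
        (if (ℓ:ℕ) = ((pick j : Fin (r^2)):ℕ)/r then (1:ℝ) else 0) else v (pick j) ℓ)
      = if (ℓ:ℕ) = (j:ℕ) then 1 else 0
    rw [if_pos ⟨j, rfl⟩, hpickdiv j]
  have hvb_other : ∀ i, (∀ j, i ≠ pick j) → vb i = v i := by
    intro i hi; funext ℓ
    show (if ∃ j : Fin r, i = pick j then _ else v i ℓ) = v i ℓ
    rw [if_neg]
    rintro ⟨j, hj⟩
    exact hi j hj
  have hvbunit : ∀ i, IsUnitSum (vb i) := by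
    intro i
    by_cases h : ∃ j : Fin r, i = pick j
    · obtain ⟨j, rfl⟩ := h
      constructor
      · intro ℓ; rw [hvb_pick]; split_ifs <;> norm_num
      · rw [Finset.sum_congr rfl fun ℓ _ => hvb_pick j ℓ]
        exact (sum_ite_val_eq (itm j) 1 0).trans (by ring)
    · rw [hvb_other i (fun j hj => h ⟨j, hj⟩)]
      exact hvunit i
  have hblkpick : ∀ j : Fin r, blk (pick j) = itm j := fun j => Fin.ext (hpickdiv j)
  have hpayd : ∀ (u : Fin (r^2) → Fin (r^2) → ℝ) (j : Fin r),
      Mpayoff p vb u (pick j) = p u (pick j) (itm j) := by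
    intro u j
    unfold Mpayoff
    rw [Finset.sum_congr rfl fun ℓ _ => by rw [hvb_pick j ℓ]]
    exact sum_mul_ite_val (itm j) _
  have hpayeq : ∀ (u : Fin (r^2) → Fin (r^2) → ℝ) i, (∀ j, i ≠ pick j) →
      Mpayoff p vb u i = Mpayoff p v u i := by
    intro u i hi
    unfold Mpayoff
    rw [hvb_other i hi]
  have hNEb : IsMNash p vb s := by
    refine ⟨hsu, ?_⟩
    intro i w hw
    by_cases h : ∃ j : Fin r, i = pick j
    · obtain ⟨j, rfl⟩ := h
      rw [hpayd _ j, hpayd _ j]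
      have h1 := hMono (pick j) w hw
      rwa [hblkpick j] at h1
    · have hi : ∀ j, i ≠ pick j := fun j hj => h ⟨j, hj⟩
      rw [hpayeq _ i hi, hpayeq _ i hi]
      exact hNE.2 i w hw
  -- optimal welfare at least r
  have hvb0 : ∀ i ℓ, 0 ≤ vb i ℓ := fun i ℓ => (hvbunit i).1 ℓ
  have hbdd : ∀ ℓ : Fin (r^2), BddAbove (Set.range fun i => vb i ℓ) :=
    fun ℓ => Set.Finite.bddAbove (Set.finite_range _)
  have hi0 : Fin (r^2) := ⟨0, pow_pos hr1 2⟩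
  have hsup0 : ∀ ℓ, (0:ℝ) ≤ ⨆ i, vb i ℓ :=
    fun ℓ => le_trans (hvb0 hi0 ℓ) (le_ciSup (hbdd ℓ) hi0)
  have hsup1 : ∀ j : Fin r, (1:ℝ) ≤ ⨆ i, vb i (itm j) := by
    intro j
    have h1 : vb (pick j) (itm j) = 1 := by
      rw [hvb_pick, if_pos (hitmval j)]
    calc (1:ℝ) = vb (pick j) (itm j) := h1.symm
      _ ≤ ⨆ i, vb i (itm j) := le_ciSup (hbdd _) _
  have hitminj : Function.Injective itm := by
    intro j1 j2 h
    have h1 : ((itm j1 : Fin (r^2)) : ℕ) = ((itm j2 : Fin (r^2)) : ℕ) := by rw [h]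
    rw [hitmval, hitmval] at h1
    exact Fin.ext h1
  have hopt : (r:ℝ) ≤ ∑ ℓ, ⨆ i, vb i ℓ := by
    calc (r:ℝ) = ∑ _j : Fin r, (1:ℝ) := by
          rw [Finset.sum_const, Finset.card_univ, Fintype.card_fin, nsmul_eq_mul, mul_one]
      _ ≤ ∑ j : Fin r, ⨆ i, vb i (itm j) := Finset.sum_le_sum fun j _ => hsup1 j
      _ = ∑ ℓ ∈ Finset.univ.image itm, ⨆ i, vb i ℓ :=
          (Finset.sum_image (s := Finset.univ) (g := itm)
            (f := fun ℓ => ⨆ i, vb i ℓ) (fun x _ y _ h => hitminj h)).symm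
      _ ≤ ∑ ℓ, ⨆ i, vb i ℓ :=
          Finset.sum_le_sum_of_subset_of_nonneg (Finset.subset_univ _)
            (fun ℓ _ _ => hsup0 ℓ)
  -- welfare at most 3
  have hpayv_le : ∀ i, (∀ j, i ≠ pick j) → Mpayoff p vb s i ≤ a := by
    intro i hi
    rw [hpayeq s i hi]
    unfold Mpayoff
    calc ∑ ℓ, p s i ℓ * v i ℓ ≤ ∑ ℓ, p s i ℓ * a :=
        Finset.sum_le_sum fun ℓ _ => mul_le_mul_of_nonneg_left (hva i ℓ) (hp0 i ℓ)
      _ = a := by rw [← Finset.sum_mul, hone s hsu i, one_mul]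
  have hpick_le : ∀ j : Fin r, Mpayoff p vb s (pick j) ≤ 1/(r:ℝ) := by
    intro j
    rw [hpayd s j]
    exact hmin j
  set T : Finset (Fin (r^2)) := Finset.univ.image pick with hT
  have hsplit : ∑ i, Mpayoff p vb s i
      = ∑ i ∈ T, Mpayoff p vb s i + ∑ i ∈ Tᶜ, Mpayoff p vb s i :=
    (Finset.sum_add_sum_compl T _).symm
  have h1 : ∑ i ∈ T, Mpayoff p vb s i ≤ 1 := by
    rw [hT, Finset.sum_image (fun x _ y _ h => hpickinj h)]
    calc ∑ j : Fin r, Mpayoff p vb s (pick j) ≤ ∑ _j : Fin r, 1/(r:ℝ) :=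
        Finset.sum_le_sum fun j _ => hpick_le j
      _ = 1 := by
        rw [Finset.sum_const, Finset.card_univ, Fintype.card_fin, nsmul_eq_mul]
        field_simp
  have h2 : ∑ i ∈ Tᶜ, Mpayoff p vb s i ≤ 2 := by
    have hc : ∀ i ∈ Tᶜ, Mpayoff p vb s i ≤ a := by
      intro i hi
      apply hpayv_le
      intro j hj
      exact (Finset.mem_compl.mp hi)
        (hj ▸ Finset.mem_image_of_mem pick (Finset.mem_univ j))
    have hcard : ((Tᶜ.card : ℕ) : ℝ) ≤ ((r^2 : ℕ) : ℝ) := by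
      exact_mod_cast (Finset.card_le_univ Tᶜ).trans_eq (Fintype.card_fin _)
    have hNa : N * a ≤ 2 := by
      have h3 : N * ε ≤ N * (1/N^3) := mul_le_mul_of_nonneg_left hε1 hN0.le
      have h4 : N * (1/N^3) ≤ 1 := by
        rw [mul_one_div, div_le_one (by positivity)]
        nlinarith [mul_pos (mul_pos hN0 hN1) (by linarith : (0:ℝ) < N + 1)]
      have h5 : N * a = 1 + N*ε := by rw [hadef]; field_simp
      linarith
    calc ∑ i ∈ Tᶜ, Mpayoff p vb s i ≤ ∑ _i ∈ Tᶜ, a := Finset.sum_le_sum hc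
      _ = (Tᶜ.card : ℝ) * a := by rw [Finset.sum_const, nsmul_eq_mul]
      _ ≤ ((r^2 : ℕ) : ℝ) * a := mul_le_mul_of_nonneg_right hcard ha0
      _ ≤ 2 := by rw [hcast]; exact hNa
  refine ⟨vb, pick, hvbunit, hpickdiv, hvb_pick, hvb_other, hNEb, hopt, ?_⟩
  rw [hsplit]
  linarith
end
end

section
/- (Late items can be won outright under Probabilistic Serial.) Let v′ be unit-sum true valuations and let σ be a profile of reported orders that is a pure Nash equilibrium of Probabilistic Serial with respect to v′. Let i be any agent, let q ≥ 2 be a real number, and let X = {x_1, …, x_k} be a set of k distinct items with k ≤ ⌊q⌋ − 1 whose consumption times under σ are all at least q. Then agent i's equilibrium payoff is at least ∑_{ℓ=1}^k v′_i(x_ℓ). -/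
open MeasureTheory

noncomputable section

/-- A Probabilistic Serial (PS) execution for the profile of reported orders `σ`:
agent `i` prefers item `j` to item `ℓ` iff `σ i j ≤ σ i ℓ` (smaller rank = better). -/
structure PSExec (n m : ℕ) (σ : Fin n → Equiv.Perm (Fin m)) where
  q : Fin m → ℝ → ℝ
  c : Fin n → Fin m → ℝ → ℝ
  q_mem : ∀ j t, t ∈ Set.Icc (0 : ℝ) ((m : ℝ) / (n : ℝ)) → q j t ∈ Set.Icc (0 : ℝ) 1
  c_nonneg : ∀ i j t, 0 ≤ c i j t
  c_integrable : ∀ i j, IntervalIntegrable (c i j) volume 0 ((m : ℝ) / (n : ℝ))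
  q_eq : ∀ j t, t ∈ Set.Icc (0 : ℝ) ((m : ℝ) / (n : ℝ)) →
    q j t = 1 - ∫ s in (0 : ℝ)..t, ∑ i, c i j s
  c_one : ∀ i j t, t ∈ Set.Icc (0 : ℝ) ((m : ℝ) / (n : ℝ)) → 0 < q j t →
    (∀ ℓ, 0 < q ℓ t → σ i j ≤ σ i ℓ) → c i j t = 1
  c_zero : ∀ i j t, t ∈ Set.Icc (0 : ℝ) ((m : ℝ) / (n : ℝ)) →
    ¬ (0 < q j t ∧ ∀ ℓ, 0 < q ℓ t → σ i j ≤ σ i ℓ) → c i j t = 0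

/-- The consumption time of item `j` in a PS execution. -/
def PSExec.consTime {n m : ℕ} {σ : Fin n → Equiv.Perm (Fin m)} (E : PSExec n m σ)
    (j : Fin m) : ℝ :=
  sInf {t : ℝ | t ∈ Set.Icc (0 : ℝ) ((m : ℝ) / (n : ℝ)) ∧ E.q j t = 0}

/-- Agent `i`'s (expected) PS payoff under true valuations `v'`. -/
def PSExec.payoff {n m : ℕ} {σ : Fin n → Equiv.Perm (Fin m)} (E : PSExec n m σ)
    (v' : Fin n → Fin m → ℝ) (i : Fin n) : ℝ :=
  ∑ j, v' i j * ∫ s in (0 : ℝ)..((m : ℝ) / (n : ℝ)), E.c i j s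

/-- The profile of orders `σ`, with the execution `E`, is a pure Nash equilibrium of PS
with respect to `v'`: no agent can strictly increase its payoff by reporting a
different order. -/
def IsPSNash {n m : ℕ} (v' : Fin n → Fin m → ℝ) (σ : Fin n → Equiv.Perm (Fin m))
    (E : PSExec n m σ) : Prop :=
  ∀ (i : Fin n) (τ : Equiv.Perm (Fin m))
    (E' : PSExec n m (Function.update σ i τ)), E'.payoff v' i ≤ E.payoff v' i


namespace PSaux

open scoped Classical

variable {n m : ℕ} (π : Fin n → Equiv.Perm (Fin m))

/-- agent `h` eats item `j` when remaining quantities are `r`. -/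
def eats (r : Fin m → ℝ) (h : Fin n) (j : Fin m) : Prop :=
  0 < r j ∧ ∀ ℓ, 0 < r ℓ → π h j ≤ π h ℓ

def rate (r : Fin m → ℝ) (j : Fin m) : ℕ :=
  (Finset.univ.filter fun h => eats π r h j).card

def S (r : Fin m → ℝ) : Finset (Fin m) :=
  Finset.univ.filter fun j => 0 < rate π r j

def delta (r : Fin m → ℝ) : ℝ :=
  if H : (S π r).Nonempty then (S π r).inf' H (fun j => r j / (rate π r j : ℝ)) else 0

def step (r : Fin m → ℝ) : Fin m → ℝ := fun j => r j - delta π r * (rate π r j : ℝ)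

def R (p : ℕ) : Fin m → ℝ := (step π)^[p] (fun _ => 1)

def T (p : ℕ) : ℝ := ∑ p' ∈ Finset.range p, delta π (R π p')

variable {π}

lemma rate_pos_iff {r : Fin m → ℝ} {j : Fin m} :
    0 < rate π r j ↔ ∃ h, eats π r h j := by
  simp [rate, Finset.card_pos, Finset.filter_nonempty_iff]

lemma rate_pos_imp {r : Fin m → ℝ} {j : Fin m} (h : 0 < rate π r j) : 0 < r j := by
  obtain ⟨h', hh⟩ := rate_pos_iff.1 h; exact hh.1

lemma exists_eats {r : Fin m → ℝ} (hav : ∃ j, 0 < r j) (h : Fin n) :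
    ∃ j, eats π r h j := by
  obtain ⟨j0, hj0⟩ := hav
  have hA : (Finset.univ.filter fun j => 0 < r j).Nonempty := ⟨j0, by simp [hj0]⟩
  obtain ⟨b, hb, hbmin⟩ := Finset.exists_min_image _ (fun j => π h j) hA
  refine ⟨b, (Finset.mem_filter.1 hb).2, fun ℓ hℓ => hbmin ℓ (by simp [hℓ])⟩

lemma eats_unique {r : Fin m → ℝ} {h : Fin n} {j j' : Fin m}
    (h1 : eats π r h j) (h2 : eats π r h j') : j = j' :=
  (π h).injective (le_antisymm (h1.2 _ h2.1) (h2.2 _ h1.1))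

lemma delta_nonneg {r : Fin m → ℝ} (hr : ∀ j, 0 ≤ r j) : 0 ≤ delta π r := by
  unfold delta
  split_ifs with H
  · exact Finset.le_inf' H _ fun j hj => div_nonneg (hr j) (Nat.cast_nonneg _)
  · exact le_rfl

lemma delta_mul_rate_le {r : Fin m → ℝ} (hr : ∀ j, 0 ≤ r j) (j : Fin m) :
    delta π r * (rate π r j : ℝ) ≤ r j := by
  rcases Nat.eq_zero_or_pos (rate π r j) with h0 | hpos
  · simp [h0, hr j]
  · have hjS : j ∈ S π r := by simp [S, hpos]
    have hne : (S π r).Nonempty := ⟨j, hjS⟩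
    have hd : delta π r ≤ r j / (rate π r j : ℝ) := by
      unfold delta; rw [dif_pos hne]; exact Finset.inf'_le _ hjS
    have hc : (0:ℝ) < (rate π r j : ℝ) := by exact_mod_cast hpos
    calc delta π r * (rate π r j : ℝ) ≤ (r j / (rate π r j : ℝ)) * (rate π r j : ℝ) :=
          mul_le_mul_of_nonneg_right hd hc.le
      _ = r j := by field_simp

lemma step_nonneg {r : Fin m → ℝ} (hr : ∀ j, 0 ≤ r j) (j : Fin m) : 0 ≤ step π r j :=
  sub_nonneg.2 (delta_mul_rate_le hr j)

lemma step_le {r : Fin m → ℝ} (hr : ∀ j, 0 ≤ r j) (j : Fin m) : step π r j ≤ r j := by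
  have := delta_nonneg (π := π) hr
  have : 0 ≤ delta π r * (rate π r j : ℝ) := mul_nonneg this (Nat.cast_nonneg _)
  simp [step]; linarith

lemma delta_pos {r : Fin m → ℝ} (hr : ∀ j, 0 ≤ r j) (hav : ∃ j, 0 < r j) (hn : 0 < n) :
    0 < delta π r := by
  obtain ⟨b, hb⟩ := exists_eats (π := π) hav ⟨0, hn⟩
  have hS : (S π r).Nonempty := ⟨b, by simp [S, rate_pos_iff]; exact ⟨_, hb⟩⟩
  unfold delta; rw [dif_pos hS]
  rw [Finset.lt_inf'_iff]
  intro j hj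
  have hrate : 0 < rate π r j := (Finset.mem_filter.1 hj).2
  exact div_pos (rate_pos_imp hrate) (by exact_mod_cast hrate)

lemma step_eq_of_empty {r : Fin m → ℝ} (hav : ¬ ∃ j, 0 < r j) : step π r = r := by
  funext j
  have h0 : rate π r j = 0 := by
    by_contra h
    exact hav ⟨j, rate_pos_imp (Nat.pos_of_ne_zero h)⟩
  simp [step, h0]

lemma delta_eq_of_empty {r : Fin m → ℝ} (hav : ¬ ∃ j, 0 < r j) : delta π r = 0 := by
  have hS : ¬ (S π r).Nonempty := by
    rintro ⟨j, hj⟩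
    exact hav ⟨j, rate_pos_imp (Finset.mem_filter.1 hj).2⟩
  unfold delta; rw [dif_neg hS]

end PSaux
namespace PSaux

open scoped Classical

variable {n m : ℕ} {π : Fin n → Equiv.Perm (Fin m)}

lemma R_zero : R π 0 = fun _ => (1:ℝ) := rfl

lemma R_succ (p : ℕ) : R π (p+1) = step π (R π p) := Function.iterate_succ_apply' _ _ _

lemma T_zero : T π 0 = 0 := by simp [T]

lemma T_succ (p : ℕ) : T π (p+1) = T π p + delta π (R π p) := by
  simp [T, Finset.sum_range_succ]

lemma R_nonneg : ∀ p j, 0 ≤ R π p j := by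
  intro p
  induction p with
  | zero => intro j; rw [R_zero]; norm_num
  | succ p ih => intro j; rw [R_succ]; exact step_nonneg ih j

lemma R_succ_le (p : ℕ) (j : Fin m) : R π (p+1) j ≤ R π p j := by
  rw [R_succ]; exact step_le (R_nonneg p) j

lemma R_antitone {p p' : ℕ} (h : p ≤ p') (j : Fin m) : R π p' j ≤ R π p j := by
  induction p' with
  | zero => have : p = 0 := by omega
            subst this; exact le_rfl
  | succ p' ih =>
    rcases Nat.lt_or_ge p (p'+1) with hlt | hge
    · exact le_trans (R_succ_le p' j) (ih (by omega))
    · have : p = p' + 1 := le_antisymm h hge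
      subst this; exact le_rfl

lemma R_le_one (p : ℕ) (j : Fin m) : R π p j ≤ 1 := by
  have := R_antitone (π := π) (Nat.zero_le p) j
  rwa [R_zero] at this

lemma delta_R_nonneg (p : ℕ) : 0 ≤ delta π (R π p) := delta_nonneg (R_nonneg p)

lemma T_nonneg (p : ℕ) : 0 ≤ T π p :=
  Finset.sum_nonneg fun p' _ => delta_R_nonneg p'

lemma T_mono {p p' : ℕ} (h : p ≤ p') : T π p ≤ T π p' := by
  unfold T
  exact Finset.sum_le_sum_of_subset_of_nonneg (Finset.range_subset_range.2 h)
    (fun p'' _ _ => delta_R_nonneg p'')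

lemma sum_rate {r : Fin m → ℝ} (hav : ∃ j, 0 < r j) :
    ∑ j, rate π r j = n := by
  have hch : ∀ h : Fin n, ∃ j, eats π r h j := fun h => exists_eats hav h
  set f : Fin n → Fin m := fun h => Classical.choose (hch h) with hf
  have hfe : ∀ h, eats π r h (f h) := fun h => Classical.choose_spec (hch h)
  have hfilter : ∀ j, (Finset.univ.filter fun h => eats π r h j)
      = (Finset.univ.filter fun h => f h = j) := by
    intro j
    ext h
    simp only [Finset.mem_filter, Finset.mem_univ, true_and]
    constructor
    · intro he; exact eats_unique (hfe h) he
    · rintro rfl; exact hfe h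
  have := Finset.card_eq_sum_card_fiberwise
    (f := f) (s := Finset.univ) (t := Finset.univ) (fun h _ => Finset.mem_univ _)
  simp only [Finset.card_univ, Fintype.card_fin] at this
  conv_rhs => rw [this]
  unfold rate
  refine Finset.sum_congr rfl fun j _ => ?_
  rw [hfilter j]

lemma sum_step {r : Fin m → ℝ} (hav : ∃ j, 0 < r j) :
    ∑ j, step π r j = (∑ j, r j) - delta π r * n := by
  unfold step
  rw [Finset.sum_sub_distrib, ← Finset.mul_sum]
  congr 1
  rw [← Nat.cast_sum, sum_rate hav]

lemma sum_R (hn : 0 < n) (p : ℕ) : ∑ j, R π p j = (m : ℝ) - n * T π p := by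
  induction p with
  | zero => simp [R_zero, T_zero]
  | succ p ih =>
    by_cases hav : ∃ j, 0 < R π p j
    · rw [R_succ, sum_step hav, ih, T_succ]; ring
    · rw [R_succ, step_eq_of_empty hav, ih, T_succ, delta_eq_of_empty hav]; ring

lemma avail_card (hn : 0 < n) : ∀ p, (Finset.univ.filter fun j => 0 < R π p j).card ≤ m - p := by
  intro p
  induction p with
  | zero =>
    have := Finset.card_filter_le Finset.univ (fun j => 0 < R π 0 j)
    simpa using this
  | succ p ih =>
    by_cases hav : ∃ j, 0 < R π p j
    · -- strict decrease
      have hsub : (Finset.univ.filter fun j => 0 < R π (p+1) j)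
          ⊆ (Finset.univ.filter fun j => 0 < R π p j) := by
        intro j hj
        simp only [Finset.mem_filter, Finset.mem_univ, true_and] at *
        exact lt_of_lt_of_le hj (R_succ_le p j)
      obtain ⟨b, hb⟩ := exists_eats (π := π) hav ⟨0, hn⟩
      have hS : (S π (R π p)).Nonempty := ⟨b, by
        simp only [S, Finset.mem_filter, Finset.mem_univ, true_and, rate_pos_iff]
        exact ⟨_, hb⟩⟩
      obtain ⟨jstar, hjS, hjeq⟩ := Finset.exists_mem_eq_inf' hS
        (fun j => R π p j / (rate π (R π p) j : ℝ))
      have hrate : 0 < rate π (R π p) jstar := (Finset.mem_filter.1 hjS).2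
      have hrpos : 0 < R π p jstar := rate_pos_imp hrate
      have hzero : R π (p+1) jstar = 0 := by
        rw [R_succ]
        unfold step
        rw [show delta π (R π p) = R π p jstar / (rate π (R π p) jstar : ℝ) by
          unfold delta; rw [dif_pos hS]; exact hjeq]
        have : ((rate π (R π p) jstar : ℝ)) ≠ 0 := by
          exact_mod_cast hrate.ne'
        field_simp
        ring
      have hss : (Finset.univ.filter fun j => 0 < R π (p+1) j)
          ⊂ (Finset.univ.filter fun j => 0 < R π p j) := by
        refine Finset.ssubset_iff_of_subset hsub |>.2 ⟨jstar, ?_, ?_⟩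
        · simp [hrpos]
        · simp [hzero]
      have hlt := Finset.card_lt_card hss
      omega
    · have : (Finset.univ.filter fun j => 0 < R π (p+1) j).card
          = (Finset.univ.filter fun j => 0 < R π p j).card := by
        rw [R_succ, step_eq_of_empty hav]
      have hz : (Finset.univ.filter fun j => 0 < R π p j).card = 0 := by
        rw [Finset.card_eq_zero, Finset.filter_eq_empty_iff]
        intro j _
        exact fun hj => hav ⟨j, hj⟩
      omega

lemma R_m_eq_zero (hn : 0 < n) (j : Fin m) : R π m j = 0 := by
  have h := avail_card (π := π) hn m
  simp only [Nat.sub_self, Nat.le_zero, Finset.card_eq_zero, Finset.filter_eq_empty_iff] at h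
  have := h (Finset.mem_univ j)
  have h2 := R_nonneg (π := π) m j
  push_neg at this
  linarith

lemma T_m (hn : 0 < n) : T π m = (m : ℝ) / (n : ℝ) := by
  have := sum_R (π := π) hn m
  have hz : ∑ j, R π m j = 0 := by
    apply Finset.sum_eq_zero; intro j _; exact R_m_eq_zero hn j
  rw [hz] at this
  have hn' : (n : ℝ) ≠ 0 := by exact_mod_cast hn.ne'
  field_simp
  linarith

lemma R_frozen (hn : 0 < n) {p : ℕ} (hp : m ≤ p) : R π p = R π m := by
  induction p with
  | zero => have : m = 0 := by omega
            subst this; rfl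
  | succ p ih =>
    rcases Nat.lt_or_ge p m with h | h
    · have : m = p + 1 := by omega
      subst this; rfl
    · rw [R_succ, ih h, step_eq_of_empty]
      rintro ⟨j, hj⟩
      exact absurd (R_m_eq_zero (π := π) hn j) (by linarith)

lemma delta_Rm (hn : 0 < n) {p : ℕ} (hp : m ≤ p) : delta π (R π p) = 0 := by
  rw [R_frozen hn hp]
  apply delta_eq_of_empty
  rintro ⟨j, hj⟩
  exact absurd (R_m_eq_zero (π := π) hn j) (by linarith)

lemma T_frozen (hn : 0 < n) {p : ℕ} (hp : m ≤ p) : T π p = (m:ℝ)/(n:ℝ) := by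
  induction p with
  | zero => have : m = 0 := by omega
            subst this; simp [T_zero]
  | succ p ih =>
    rcases Nat.lt_or_ge p m with h | h
    · have : m = p + 1 := by omega
      subst this; exact T_m hn
    · rw [T_succ, ih h, delta_Rm hn h, add_zero]

lemma T_le (hn : 0 < n) (p : ℕ) : T π p ≤ (m:ℝ)/(n:ℝ) := by
  rcases Nat.lt_or_ge p m with h | h
  · rw [← T_m (π := π) hn]; exact T_mono h.le
  · rw [T_frozen hn h]

end PSaux
namespace PSaux

open scoped Classical

variable {n m : ℕ} {π : Fin n → Equiv.Perm (Fin m)}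

variable (π) in
/-- consumption rate functions of the explicitly constructed PS execution -/
def cc (h : Fin n) (j : Fin m) (t : ℝ) : ℝ :=
  ∑ p ∈ Finset.range m,
    if T π p ≤ t ∧ t < T π (p+1) ∧ eats π (R π p) h j then 1 else 0

variable (π) in
/-- remaining quantity functions of the explicitly constructed PS execution -/
def Q (j : Fin m) (t : ℝ) : ℝ := 1 - ∫ s in (0:ℝ)..t, ∑ h, cc π h j s

lemma cc_nonneg (h : Fin n) (j : Fin m) (t : ℝ) : 0 ≤ cc π h j t := by
  apply Finset.sum_nonneg; intro p _; split_ifs <;> norm_num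

lemma cc_eq_on_phase {p : ℕ} (hp : p < m) {t : ℝ} (h1 : T π p ≤ t) (h2 : t < T π (p+1))
    (h : Fin n) (j : Fin m) :
    cc π h j t = if eats π (R π p) h j then 1 else 0 := by
  unfold cc
  rw [Finset.sum_eq_single p]
  · simp [h1, h2]
  · intro p' hp' hne
    rcases Nat.lt_or_ge p' p with hlt | hge
    · have : T π (p'+1) ≤ T π p := T_mono hlt
      have : ¬ (T π p' ≤ t ∧ t < T π (p'+1) ∧ eats π (R π p') h j) := by
        rintro ⟨-, h4, -⟩; linarith
      simp [this]
    · have hgt : p < p' := by omega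
      have : T π (p+1) ≤ T π p' := T_mono hgt
      have : ¬ (T π p' ≤ t ∧ t < T π (p'+1) ∧ eats π (R π p') h j) := by
        rintro ⟨h3, -, -⟩; linarith
      simp [this]
  · intro habs; exact absurd (Finset.mem_range.2 hp) habs

lemma cc_eq_zero_late {t : ℝ} (hT : T π m ≤ t) (h : Fin n) (j : Fin m) :
    cc π h j t = 0 := by
  unfold cc
  apply Finset.sum_eq_zero
  intro p hp
  have hple : p + 1 ≤ m := Finset.mem_range.1 hp
  have : T π (p+1) ≤ T π m := T_mono hple
  have : ¬ (T π p ≤ t ∧ t < T π (p+1) ∧ eats π (R π p) h j) := by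
    rintro ⟨-, h4, -⟩; linarith
  simp [this]

lemma cc_intervalIntegrable (h : Fin n) (j : Fin m) (a b : ℝ) :
    IntervalIntegrable (cc π h j) volume a b := by
  have hfun : cc π h j = ∑ p ∈ Finset.range m, (fun t =>
      if T π p ≤ t ∧ t < T π (p+1) ∧ eats π (R π p) h j then (1:ℝ) else 0) := by
    funext t; rw [Finset.sum_apply]; rfl
  rw [hfun]
  refine IntervalIntegrable.sum _ fun p _ => ?_
  have heq : (fun t => if T π p ≤ t ∧ t < T π (p+1) ∧ eats π (R π p) h j then (1:ℝ) else 0)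
      = Set.indicator (Set.Ico (T π p) (T π (p+1)))
          (fun _ => if eats π (R π p) h j then (1:ℝ) else 0) := by
    funext t
    by_cases h1 : t ∈ Set.Ico (T π p) (T π (p+1))
    · rw [Set.indicator_of_mem h1]
      obtain ⟨ha, hb⟩ := h1
      by_cases he : eats π (R π p) h j <;> simp [ha, hb, he]
    · rw [Set.indicator_of_notMem h1]
      rw [Set.mem_Ico] at h1
      push_neg at h1
      by_cases ha : T π p ≤ t
      · have h5 := h1 ha
        have h6 : ¬ (T π p ≤ t ∧ t < T π (p+1) ∧ eats π (R π p) h j) := by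
          rintro ⟨-, hb, -⟩; linarith
        simp [h6]
      · simp [ha]
  rw [heq]
  apply MeasureTheory.Integrable.intervalIntegrable
  apply MeasureTheory.IntegrableOn.integrable_indicator _ measurableSet_Ico
  rw [MeasureTheory.integrableOn_const_iff]
  right
  exact measure_Ico_lt_top

lemma rho_intervalIntegrable (j : Fin m) (a b : ℝ) :
    IntervalIntegrable (fun s => ∑ h, cc π h j s) volume a b := by
  have hfun : (fun s => ∑ h, cc π h j s) = ∑ h : Fin n, (fun s => cc π h j s) := by
    funext s; rw [Finset.sum_apply]
  rw [hfun]
  exact IntervalIntegrable.sum _ fun h _ => cc_intervalIntegrable h j a b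

lemma sum_cc_on_phase {p : ℕ} (hp : p < m) {t : ℝ} (h1 : T π p ≤ t) (h2 : t < T π (p+1))
    (j : Fin m) :
    ∑ h, cc π h j t = (rate π (R π p) j : ℝ) := by
  rw [Finset.sum_congr rfl fun h _ => cc_eq_on_phase hp h1 h2 h j]
  rw [Finset.sum_boole]
  congr 1

lemma integral_rho_phase {p : ℕ} (hp : p < m) {t : ℝ}
    (h1 : T π p ≤ t) (h2 : t ≤ T π (p+1)) (j : Fin m) :
    ∫ s in (T π p)..t, (∑ h, cc π h j s) = (t - T π p) * (rate π (R π p) j : ℝ) := by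
  have hcongr : ∫ s in (T π p)..t, (∑ h, cc π h j s)
      = ∫ s in (T π p)..t, (rate π (R π p) j : ℝ) := by
    apply intervalIntegral.integral_congr_ae
    rw [Filter.eventually_iff, MeasureTheory.mem_ae_iff]
    refine MeasureTheory.measure_mono_null ?_ (MeasureTheory.measure_singleton (T π (p+1)))
    intro s hs
    simp only [Set.mem_compl_iff, Set.mem_setOf_eq, not_forall] at hs
    obtain ⟨hmem, hne⟩ := hs
    rw [Set.uIoc_of_le h1, Set.mem_Ioc] at hmem
    simp only [Set.mem_singleton_iff]
    by_contra hne2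
    have hlt : s < T π (p+1) := lt_of_le_of_ne (hmem.2.trans h2) hne2
    exact hne (sum_cc_on_phase hp hmem.1.le hlt j)
  rw [hcongr, intervalIntegral.integral_const, smul_eq_mul]

lemma Q_at_T : ∀ p, p ≤ m → ∀ j, Q π j (T π p) = R π p j := by
  intro p
  induction p with
  | zero => intro _ j; simp [Q, T_zero, R_zero]
  | succ p ih =>
    intro hpm j
    have hp : p < m := hpm
    have hsplit : ∫ s in (0:ℝ)..(T π (p+1)), (∑ h, cc π h j s)
        = (∫ s in (0:ℝ)..(T π p), (∑ h, cc π h j s))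
          + ∫ s in (T π p)..(T π (p+1)), (∑ h, cc π h j s) :=
      (intervalIntegral.integral_add_adjacent_intervals
        (rho_intervalIntegrable j _ _) (rho_intervalIntegrable j _ _)).symm
    have hTle : T π p ≤ T π (p+1) := T_mono (Nat.le_succ p)
    have hint2 := integral_rho_phase hp hTle le_rfl (j := j)
    have hQp := ih hp.le j
    unfold Q at hQp ⊢
    rw [hsplit, hint2, T_succ]
    have hRs : R π (p+1) j = R π p j - delta π (R π p) * (rate π (R π p) j : ℝ) := by
      rw [R_succ]; rfl
    rw [hRs]
    have h3 : (T π p + delta π (R π p) - T π p) = delta π (R π p) := by ring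
    rw [h3]
    linarith [hQp]

lemma Q_in_phase {p : ℕ} (hp : p < m) {t : ℝ} (h1 : T π p ≤ t) (h2 : t ≤ T π (p+1))
    (j : Fin m) :
    Q π j t = R π p j - (t - T π p) * (rate π (R π p) j : ℝ) := by
  have hsplit : ∫ s in (0:ℝ)..t, (∑ h, cc π h j s)
      = (∫ s in (0:ℝ)..(T π p), (∑ h, cc π h j s))
        + ∫ s in (T π p)..t, (∑ h, cc π h j s) :=
    (intervalIntegral.integral_add_adjacent_intervals
      (rho_intervalIntegrable j _ _) (rho_intervalIntegrable j _ _)).symm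
  have hQp := Q_at_T (π := π) p hp.le j
  unfold Q at hQp ⊢
  rw [hsplit, integral_rho_phase hp h1 h2]
  linarith [hQp]

lemma Q_le_phase {p : ℕ} (hp : p < m) {t : ℝ} (h1 : T π p ≤ t) (h2 : t ≤ T π (p+1))
    (j : Fin m) : Q π j t ≤ R π p j := by
  rw [Q_in_phase hp h1 h2]
  have : 0 ≤ (t - T π p) * (rate π (R π p) j : ℝ) :=
    mul_nonneg (by linarith) (Nat.cast_nonneg _)
  linarith

lemma Q_ge_phase {p : ℕ} (hp : p < m) {t : ℝ} (h1 : T π p ≤ t) (h2 : t ≤ T π (p+1))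
    (j : Fin m) : R π (p+1) j ≤ Q π j t := by
  rw [Q_in_phase hp h1 h2, R_succ]
  unfold step
  have hd : t - T π p ≤ delta π (R π p) := by
    have := T_succ (π := π) p; linarith [h2]
  have : (t - T π p) * (rate π (R π p) j : ℝ) ≤ delta π (R π p) * (rate π (R π p) j : ℝ) :=
    mul_le_mul_of_nonneg_right hd (Nat.cast_nonneg _)
  linarith

lemma Q_pos_iff {p : ℕ} (hp : p < m) {t : ℝ} (h1 : T π p ≤ t) (h2 : t < T π (p+1))
    (j : Fin m) : 0 < Q π j t ↔ 0 < R π p j := by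
  constructor
  · intro h; exact lt_of_lt_of_le h (Q_le_phase hp h1 h2.le j)
  · intro h
    rcases Nat.eq_zero_or_pos (rate π (R π p) j) with h0 | hpos
    · rw [Q_in_phase hp h1 h2.le, h0]; simpa using h
    · rw [Q_in_phase hp h1 h2.le]
      have hd : t - T π p < delta π (R π p) := by
        have := T_succ (π := π) p; linarith [h2]
      have hrc : (0:ℝ) < (rate π (R π p) j : ℝ) := by exact_mod_cast hpos
      have hmul : (t - T π p) * (rate π (R π p) j : ℝ)
          < delta π (R π p) * (rate π (R π p) j : ℝ) :=
        mul_lt_mul_of_pos_right hd hrc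
      have hR1 := R_nonneg (π := π) (p+1) j
      rw [R_succ] at hR1
      unfold step at hR1
      linarith

lemma phase_or_late (hn : 0 < n) {t : ℝ} (ht : t ∈ Set.Icc (0:ℝ) ((m:ℝ)/(n:ℝ))) :
    (∃ p, p < m ∧ T π p ≤ t ∧ t < T π (p+1)) ∨ (T π m ≤ t ∧ t = (m:ℝ)/(n:ℝ)) := by
  by_cases H : ∃ p, p < m ∧ T π p ≤ t ∧ t < T π (p+1)
  · exact Or.inl H
  · push_neg at H
    right
    have hall : ∀ p, p ≤ m → T π p ≤ t := by
      intro p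
      induction p with
      | zero => intro _; rw [T_zero]; exact ht.1
      | succ p ih =>
        intro hpm
        have h1 := ih (by omega)
        by_contra hc
        push_neg at hc
        exact absurd hc (not_lt.2 ((H p (by omega) (h1)) ))
    have h1 := hall m le_rfl
    have h2 : t = (m:ℝ)/(n:ℝ) := le_antisymm ht.2 (by rw [T_m hn] at h1; exact h1)
    exact ⟨h1, h2⟩

variable (π) in
def psE (hn : 0 < n) : PSExec n m π where
  q := Q π
  c := cc π
  q_mem := by
    intro j t ht
    rcases phase_or_late (π := π) hn ht with ⟨p, hp, h1, h2⟩ | ⟨h1, h2⟩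
    · constructor
      · exact le_trans (R_nonneg (p+1) j) (Q_ge_phase hp h1 h2.le j)
      · exact le_trans (Q_le_phase hp h1 h2.le j) (R_le_one p j)
    · have hm : 0 < m := j.pos
      have : t = T π m := by rw [h2, T_m hn]
      rw [this, Q_at_T m le_rfl j, R_m_eq_zero hn j]
      norm_num
  c_nonneg := fun h j t => cc_nonneg h j t
  c_integrable := fun h j => cc_intervalIntegrable h j _ _
  q_eq := fun j t _ => rfl
  c_one := by
    intro h j t ht hpos hbest
    rcases phase_or_late (π := π) hn ht with ⟨p, hp, h1, h2⟩ | ⟨h1, h2⟩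
    · rw [cc_eq_on_phase hp h1 h2, if_pos]
      refine ⟨(Q_pos_iff hp h1 h2 j).1 hpos, fun ℓ hℓ => hbest ℓ ((Q_pos_iff hp h1 h2 ℓ).2 hℓ)⟩
    · exfalso
      have hm : 0 < m := j.pos
      have : t = T π m := by rw [h2, T_m hn]
      rw [this, Q_at_T m le_rfl j, R_m_eq_zero hn j] at hpos
      exact lt_irrefl _ hpos
  c_zero := by
    intro h j t ht hnot
    rcases phase_or_late (π := π) hn ht with ⟨p, hp, h1, h2⟩ | ⟨h1, h2⟩
    · rw [cc_eq_on_phase hp h1 h2, if_neg]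
      intro he
      exact hnot ⟨(Q_pos_iff hp h1 h2 j).2 he.1,
        fun ℓ hℓ => he.2 ℓ ((Q_pos_iff hp h1 h2 ℓ).1 hℓ)⟩
    · exact cc_eq_zero_late h1 h j

end PSaux
namespace PSaux

variable {n m : ℕ} {σ : Fin n → Equiv.Perm (Fin m)}

lemma E_rho_integrable (E : PSExec n m σ) (j : Fin m) {a b : ℝ}
    (h : Set.uIcc a b ⊆ Set.uIcc 0 ((m:ℝ)/(n:ℝ))) :
    IntervalIntegrable (fun s => ∑ h', E.c h' j s) volume a b := by
  have hfun : (fun s => ∑ h', E.c h' j s) = ∑ h' : Fin n, (fun s => E.c h' j s) := by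
    funext s; rw [Finset.sum_apply]
  rw [hfun]
  exact IntervalIntegrable.sum _ fun h' _ => (E.c_integrable h' j).mono_set h

lemma E_q_split (E : PSExec n m σ) (j : Fin m) {a b : ℝ}
    (h0 : 0 ≤ a) (hab : a ≤ b) (hb : b ≤ (m:ℝ)/(n:ℝ)) :
    E.q j b = E.q j a - ∫ s in a..b, ∑ h', E.c h' j s := by
  have ham : a ≤ (m:ℝ)/(n:ℝ) := hab.trans hb
  have h1 : Set.uIcc 0 a ⊆ Set.uIcc 0 ((m:ℝ)/(n:ℝ)) := by
    rw [Set.uIcc_of_le h0, Set.uIcc_of_le (h0.trans ham)]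
    exact Set.Icc_subset_Icc le_rfl ham
  have h2 : Set.uIcc a b ⊆ Set.uIcc 0 ((m:ℝ)/(n:ℝ)) := by
    rw [Set.uIcc_of_le hab, Set.uIcc_of_le (h0.trans ham)]
    exact Set.Icc_subset_Icc h0 hb
  have hsplit := intervalIntegral.integral_add_adjacent_intervals
    (E_rho_integrable E j h1) (E_rho_integrable E j h2)
  rw [E.q_eq j b ⟨h0.trans hab, hb⟩, E.q_eq j a ⟨h0, ham⟩, ← hsplit]
  ring

lemma E_q_mono (E : PSExec n m σ) (j : Fin m) {a b : ℝ}
    (h0 : 0 ≤ a) (hab : a ≤ b) (hb : b ≤ (m:ℝ)/(n:ℝ)) :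
    E.q j b ≤ E.q j a := by
  rw [E_q_split E j h0 hab hb]
  have : 0 ≤ ∫ s in a..b, ∑ h', E.c h' j s :=
    intervalIntegral.integral_nonneg hab fun s _ =>
      Finset.sum_nonneg fun h' _ => E.c_nonneg h' j s
  linarith

/-- Before time `q - 1`, no agent's best available item can be an item that
survives to time `q`. -/
lemma factF (E : PSExec n m σ) {X : Finset (Fin m)} {qr : ℝ}
    (hqm : qr ≤ (m:ℝ)/(n:ℝ))
    (hpos : ∀ x ∈ X, ∀ t, 0 ≤ t → t < qr → 0 < E.q x t)
    {h : Fin n} {t : ℝ} (ht0 : 0 ≤ t) (ht : t < qr - 1) {x : Fin m} (hx : x ∈ X) :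
    ¬ (0 < E.q x t ∧ ∀ ℓ, 0 < E.q ℓ t → σ h x ≤ σ h ℓ) := by
  rintro ⟨hqx, hbest⟩
  set s0 := (t + 1 + qr)/2 with hs0
  have hs1 : t + 1 < s0 := by rw [hs0]; linarith
  have hs2 : s0 < qr := by rw [hs0]; linarith
  have hs0m : s0 ≤ (m:ℝ)/(n:ℝ) := hs2.le.trans hqm
  have hts0 : t ≤ s0 := by linarith
  have hone : ∀ s ∈ Set.Icc t s0, E.c h x s = 1 := by
    intro s hs
    refine E.c_one h x s ⟨ht0.trans hs.1, hs.2.trans hs0m⟩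
      (hpos x hx s (ht0.trans hs.1) (lt_of_le_of_lt hs.2 hs2)) ?_
    intro ℓ hℓ
    apply hbest
    by_contra hc
    push_neg at hc
    have hmono := E_q_mono E ℓ ht0 hs.1 (hs.2.trans hs0m)
    linarith
  have hsum : ∀ s ∈ Set.Icc t s0, (1:ℝ) ≤ ∑ h', E.c h' x s := by
    intro s hs
    have hle : E.c h x s ≤ ∑ h', E.c h' x s :=
      Finset.single_le_sum (fun h' _ => E.c_nonneg h' x s) (Finset.mem_univ h)
    rw [hone s hs] at hle
    exact hle
  have h2 : Set.uIcc t s0 ⊆ Set.uIcc 0 ((m:ℝ)/(n:ℝ)) := by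
    rw [Set.uIcc_of_le hts0, Set.uIcc_of_le ((ht0.trans hts0).trans hs0m)]
    exact Set.Icc_subset_Icc ht0 hs0m
  have hint : (s0 - t) * 1 ≤ ∫ s in t..s0, ∑ h', E.c h' x s := by
    have := intervalIntegral.integral_mono_on hts0
      (intervalIntegrable_const (c := (1:ℝ))) (E_rho_integrable E x h2) hsum
    rwa [intervalIntegral.integral_const, smul_eq_mul] at this
  have hsplit := E_q_split E x ht0 hts0 hs0m
  have hq1 : E.q x t ≤ 1 := (E.q_mem x t ⟨ht0, (hts0.trans hs0m)⟩).2
  have hqs0 : 0 < E.q x s0 := hpos x hx s0 (ht0.trans hts0) hs2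
  rw [hsplit] at hqs0
  linarith

end PSaux
namespace PSaux

open scoped Classical

lemma integral_ge_of_Ico {f : ℝ → ℝ} {a b C : ℝ} (hab : a ≤ b)
    (hf : IntervalIntegrable f volume a b)
    (h : ∀ s, a ≤ s → s < b → C ≤ f s) : (b - a) * C ≤ ∫ s in a..b, f s := by
  have hmono : ∫ s in a..b, (C:ℝ) ≤ ∫ s in a..b, f s := by
    apply intervalIntegral.integral_mono_ae_restrict hab
      (intervalIntegrable_const (c := C)) hf
    rw [Filter.EventuallyLE, Filter.eventually_iff, MeasureTheory.mem_ae_iff,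
      MeasureTheory.Measure.restrict_apply' measurableSet_Icc]
    refine MeasureTheory.measure_mono_null ?_ (MeasureTheory.measure_singleton b)
    intro s hs
    obtain ⟨hs1, hs2⟩ := hs
    simp only [Set.mem_compl_iff, Set.mem_setOf_eq, not_le] at hs1
    simp only [Set.mem_singleton_iff]
    by_contra hne
    have : s < b := lt_of_le_of_ne hs2.2 hne
    exact absurd (h s hs2.1 this) (not_le.2 hs1)
  rwa [intervalIntegral.integral_const, smul_eq_mul] at hmono

lemma exists_perm_front {m : ℕ} (X : Finset (Fin m)) :
    ∃ τ : Equiv.Perm (Fin m), ∀ j, ((τ j : ℕ) < X.card ↔ j ∈ X) := by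
  classical
  set k := X.card with hk
  have hkm : k ≤ m := by
    have := Finset.card_le_card (Finset.subset_univ X)
    simpa using this
  have hcard1 : Fintype.card {x : Fin m // x ∈ X} = k := by
    simp [hk]
  have hcard2 : Fintype.card {x : Fin m // ¬ x ∈ X} = m - k := by
    rw [Fintype.card_subtype_compl, hcard1, Fintype.card_fin]
  obtain ⟨e1⟩ := Fintype.card_eq.1 (by rw [hcard1, Fintype.card_fin] :
    Fintype.card {x : Fin m // x ∈ X} = Fintype.card (Fin k))
  obtain ⟨e2⟩ := Fintype.card_eq.1 (by rw [hcard2, Fintype.card_fin] :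
    Fintype.card {x : Fin m // ¬ x ∈ X} = Fintype.card (Fin (m - k)))
  have hsum : k + (m - k) = m := by omega
  refine ⟨((Equiv.sumCompl (· ∈ X)).symm.trans
    ((e1.sumCongr e2).trans (finSumFinEquiv.trans (finCongr hsum)))), ?_⟩
  intro j
  by_cases hj : j ∈ X
  · simp only [Equiv.trans_apply]
    rw [Equiv.sumCompl_symm_apply_of_pos hj]
    simp only [Equiv.sumCongr_apply, Sum.map_inl, finSumFinEquiv_apply_left, finCongr_apply]
    constructor
    · intro _; exact hj
    · intro _
      simp only [Fin.coe_cast, Fin.coe_castAdd]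
      exact (e1 ⟨j, hj⟩).isLt
  · simp only [Equiv.trans_apply]
    rw [Equiv.sumCompl_symm_apply_of_neg hj]
    simp only [Equiv.sumCongr_apply, Sum.map_inr, finSumFinEquiv_apply_right, finCongr_apply]
    constructor
    · intro hlt
      exfalso
      simp only [Fin.coe_cast, Fin.coe_natAdd] at hlt
      omega
    · intro hmem; exact absurd hmem hj

end PSaux
open PSaux in
/-- **Late items can be won outright under Probabilistic Serial.**  Let `v'` be unit-sum
true valuations and let `σ` (with execution `E`) be a pure Nash equilibrium of PS with
respect to `v'`.  Let `i` be any agent, `q ≥ 2` a real number, and `X` a set of at most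
`⌊q⌋ − 1` distinct items whose consumption times under `σ` are all at least `q`.  Then
agent `i`'s equilibrium payoff is at least `∑_{j ∈ X} v'_i(j)`. -/
theorem ps_late_items_won (n m : ℕ) (v' : Fin n → Fin m → ℝ)
    (hv' : ∀ i, IsUnitSum (v' i))
    (σ : Fin n → Equiv.Perm (Fin m)) (E : PSExec n m σ) (hNE : IsPSNash v' σ E)
    (i : Fin n) (q : ℝ) (hq : 2 ≤ q) (X : Finset (Fin m))
    (hcard : (X.card : ℤ) ≤ ⌊q⌋ - 1)
    (hlate : ∀ j ∈ X, q ≤ E.consTime j) :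
    ∑ j ∈ X, v' i j ≤ E.payoff v' i := by
  classical
  have hn : 0 < n := i.pos
  have hdivnn : (0:ℝ) ≤ (m:ℝ)/(n:ℝ) := by positivity
  have hpay_nonneg : (0:ℝ) ≤ E.payoff v' i := by
    apply Finset.sum_nonneg
    intro j _
    exact mul_nonneg ((hv' i).1 j)
      (intervalIntegral.integral_nonneg hdivnn (fun s _ => E.c_nonneg i j s))
  rcases Finset.eq_empty_or_nonempty X with rfl | hXne
  · simpa using hpay_nonneg
  obtain ⟨xb, hxb⟩ := hXne
  have hm : 0 < m := xb.pos
  have hq0 : (0:ℝ) < q := by linarith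
  have hqm : q ≤ (m:ℝ)/(n:ℝ) := by
    have hlx := hlate xb hxb
    by_contra hc
    push_neg at hc
    rcases Set.eq_empty_or_nonempty
        {t : ℝ | t ∈ Set.Icc (0:ℝ) ((m:ℝ)/(n:ℝ)) ∧ E.q xb t = 0} with he | ⟨t0, ht0⟩
    · rw [PSExec.consTime, he, Real.sInf_empty] at hlx; linarith
    · have h1 : E.consTime xb ≤ t0 := csInf_le ⟨0, fun t ht => ht.1.1⟩ ht0
      have h2 := ht0.1.2
      linarith
  have hposX : ∀ x ∈ X, ∀ t, 0 ≤ t → t < q → 0 < E.q x t := by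
    intro x hx t ht0 htq
    have htm : t ≤ (m:ℝ)/(n:ℝ) := le_trans htq.le hqm
    rcases lt_or_eq_of_le ((E.q_mem x t ⟨ht0, htm⟩).1) with h | h
    · exact h
    · exfalso
      have hmem : t ∈ {t : ℝ | t ∈ Set.Icc (0:ℝ) ((m:ℝ)/(n:ℝ)) ∧ E.q x t = 0} :=
        ⟨⟨ht0, htm⟩, h.symm⟩
      have h1 : E.consTime x ≤ t := csInf_le ⟨0, fun t ht => ht.1.1⟩ hmem
      have h2 := hlate x hx
      linarith
  set k := X.card with hkdef
  have hkm : k ≤ m := by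
    have := Finset.card_le_card (Finset.subset_univ X)
    simpa [hkdef] using this
  have hkq : (k:ℝ) ≤ q - 1 := by
    have h2 : (⌊q⌋:ℝ) ≤ q := Int.floor_le q
    have h3 : ((k:ℤ):ℝ) ≤ ((⌊q⌋ - 1 : ℤ):ℝ) := by exact_mod_cast hcard
    push_cast at h3
    linarith
  obtain ⟨τ, hτ⟩ := exists_perm_front X
  set π := Function.update σ i τ with hπdef
  have hν : ∀ x ∈ X, (τ x : ℕ) < k := fun x hx => (hτ x).2 hx
  -- Claim C: an agent (≠ i) eating a non-X item in the constructed run also eats it in E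
  have hCC : ∀ p : ℕ, T π p ≤ (k:ℝ) →
      (∀ j, j ∉ X → E.q j (T π p) ≤ R π p j) →
      ∀ h, h ≠ i → ∀ j, j ∉ X → eats π (R π p) h j →
      ∀ s, T π p ≤ s → s < q - 1 → 0 < E.q j s → E.c h j s = 1 := by
    intro p hTpk ha h hhi j hjX hje s hs1 hs2 hqjs
    have hs0 : 0 ≤ s := le_trans (T_nonneg p) hs1
    have hsm : s ≤ (m:ℝ)/(n:ℝ) := by linarith
    have hπh : π h = σ h := Function.update_of_ne hhi τ σ
    have hAne : (Finset.univ.filter fun ℓ => 0 < E.q ℓ s).Nonempty := ⟨j, by simp [hqjs]⟩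
    obtain ⟨b, hbmem, hbmin⟩ := Finset.exists_min_image _ (fun ℓ => σ h ℓ) hAne
    have hbpos : 0 < E.q b s := (Finset.mem_filter.1 hbmem).2
    have hbbest : ∀ ℓ, 0 < E.q ℓ s → σ h b ≤ σ h ℓ := fun ℓ hℓ => hbmin ℓ (by simp [hℓ])
    have hbX : b ∉ X := by
      intro hbX
      exact factF E hqm hposX hs0 hs2 hbX ⟨hbpos, hbbest⟩
    have hjb : σ h j ≤ σ h b := by
      by_contra hcon
      push_neg at hcon
      have hRb : ¬ (0 < R π p b) := by
        intro hRb
        have h5 := hje.2 b hRb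
        rw [hπh] at h5
        exact absurd h5 (not_le.2 hcon)
      push_neg at hRb
      have hTpm : T π p ≤ (m:ℝ)/(n:ℝ) := by linarith
      have hqb0 : E.q b (T π p) = 0 := le_antisymm (le_trans (ha b hbX) hRb)
        ((E.q_mem b (T π p) ⟨T_nonneg p, hTpm⟩).1)
      have h6 := E_q_mono E b (T_nonneg p) hs1 hsm
      linarith
    exact E.c_one h j s ⟨hs0, hsm⟩ hqjs (fun ℓ hℓ => le_trans hjb (hbbest ℓ hℓ))
  -- NOX: nobody except i ever eats an item of X in the constructed run
  have hNOX : ∀ p : ℕ,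
      (∀ x ∈ X, R π p x = max 0 (min 1 (((τ x:ℕ):ℝ) + 1 - T π p))) →
      (T π p ≤ (k:ℝ) → ∀ j, j ∉ X → E.q j (T π p) ≤ R π p j) →
      ∀ h, h ≠ i → ∀ x ∈ X, ¬ eats π (R π p) h x := by
    intro p hb ha h hhi x hx hex
    have hRx : 0 < R π p x := hex.1
    have hTν : T π p < ((τ x:ℕ):ℝ) + 1 := by
      by_contra hcon
      push_neg at hcon
      rw [hb x hx] at hRx
      have h5 : min 1 (((τ x:ℕ):ℝ) + 1 - T π p) ≤ 0 :=
        le_trans (min_le_right _ _) (by linarith)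
      rw [max_eq_left h5] at hRx
      exact lt_irrefl _ hRx
    have hνk : ((τ x:ℕ):ℝ) + 1 ≤ (k:ℝ) := by
      have h5 := hν x hx
      have : ((τ x:ℕ):ℕ) + 1 ≤ k := h5
      exact_mod_cast this
    have hTpk : T π p ≤ (k:ℝ) := by linarith
    have hs2 : T π p < q - 1 := by linarith
    have hqxs : 0 < E.q x (T π p) := hposX x hx _ (T_nonneg p) (by linarith)
    have hπh : π h = σ h := Function.update_of_ne hhi τ σ
    have hAne : (Finset.univ.filter fun ℓ => 0 < E.q ℓ (T π p)).Nonempty :=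
      ⟨x, by simp [hqxs]⟩
    obtain ⟨b, hbmem, hbmin⟩ := Finset.exists_min_image _ (fun ℓ => σ h ℓ) hAne
    have hbpos : 0 < E.q b (T π p) := (Finset.mem_filter.1 hbmem).2
    have hbbest : ∀ ℓ, 0 < E.q ℓ (T π p) → σ h b ≤ σ h ℓ := fun ℓ hℓ => hbmin ℓ (by simp [hℓ])
    have hbX : b ∉ X := by
      intro hbX
      exact factF E hqm hposX (T_nonneg p) hs2 hbX ⟨hbpos, hbbest⟩
    have hxble : σ h x ≤ σ h b := by
      by_contra hcon
      push_neg at hcon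
      have hRb : ¬ (0 < R π p b) := by
        intro hRb
        have h5 := hex.2 b hRb
        rw [hπh] at h5
        exact absurd h5 (not_le.2 hcon)
      push_neg at hRb
      have hTpm : T π p ≤ (m:ℝ)/(n:ℝ) := by linarith
      have hqb0 : E.q b (T π p) = 0 := le_antisymm (le_trans (ha hTpk b hbX) hRb)
        ((E.q_mem b (T π p) ⟨T_nonneg p, hTpm⟩).1)
      linarith
    exact factF E hqm hposX (T_nonneg p) hs2 hx
      ⟨hqxs, fun ℓ hℓ => le_trans hxble (hbbest ℓ hℓ)⟩
  -- the main phase-by-phase invariant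
  have hmain : ∀ p : ℕ,
      (T π p ≤ (k:ℝ) → ∀ j, j ∉ X → E.q j (T π p) ≤ R π p j) ∧
      (∀ x ∈ X, R π p x = max 0 (min 1 (((τ x:ℕ):ℝ) + 1 - T π p))) := by
    intro p
    induction p with
    | zero =>
      constructor
      · intro _ j hj
        rw [T_zero]
        have h5 := (E.q_mem j 0 ⟨le_rfl, hdivnn⟩).2
        simpa [R_zero] using h5
      · intro x hx
        rw [T_zero, R_zero]
        have h1 : (1:ℝ) ≤ ((τ x:ℕ):ℝ) + 1 - 0 := by
          have : (0:ℝ) ≤ ((τ x:ℕ):ℝ) := Nat.cast_nonneg _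
          linarith
        rw [min_eq_left h1, max_eq_right (by norm_num : (0:ℝ) ≤ 1)]
    | succ p ih =>
      obtain ⟨ha, hb⟩ := ih
      have hT01 : T π p ≤ T π (p+1) := T_mono (Nat.le_succ p)
      have hδ0 : 0 ≤ delta π (R π p) := delta_R_nonneg p
      have hTs : T π (p+1) = T π p + delta π (R π p) := T_succ p
      by_cases hTk : T π p < (k:ℝ)
      · -- active case
        have hfl1 : ((⌊T π p⌋₊:ℕ):ℝ) ≤ T π p := Nat.floor_le (T_nonneg p)
        have hfl2 : T π p < ((⌊T π p⌋₊:ℕ):ℝ) + 1 := Nat.lt_floor_add_one _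
        have hfl3 : ⌊T π p⌋₊ < k := by
          rw [Nat.floor_lt (T_nonneg p)]; exact hTk
        have hℓ0m : ⌊T π p⌋₊ < m := lt_of_lt_of_le hfl3 hkm
        set x0 : Fin m := τ.symm ⟨⌊T π p⌋₊, hℓ0m⟩ with hx0
        have hτx0 : (τ x0 : ℕ) = ⌊T π p⌋₊ := by rw [hx0]; simp
        have hx0X : x0 ∈ X := (hτ x0).1 (by rw [hτx0]; exact hfl3)
        have hRx0 : R π p x0 = ((⌊T π p⌋₊:ℕ):ℝ) + 1 - T π p := by
          rw [hb x0 hx0X, hτx0]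
          have h1 : ((⌊T π p⌋₊:ℕ):ℝ) + 1 - T π p ≤ 1 := by linarith
          have h2 : 0 < ((⌊T π p⌋₊:ℕ):ℝ) + 1 - T π p := by linarith
          rw [min_eq_right h1, max_eq_right h2.le]
        have heatsi : eats π (R π p) i x0 := by
          refine ⟨by rw [hRx0]; linarith, ?_⟩
          intro ℓ hℓ
          have hπi : π i = τ := Function.update_self i τ σ
          rw [hπi]
          by_cases hℓX : ℓ ∈ X
          · rw [hb ℓ hℓX] at hℓ
            have hTν : T π p < ((τ ℓ:ℕ):ℝ) + 1 := by
              by_contra hcon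
              push_neg at hcon
              have h5 : min 1 (((τ ℓ:ℕ):ℝ) + 1 - T π p) ≤ 0 :=
                le_trans (min_le_right _ _) (by linarith)
              rw [max_eq_left h5] at hℓ
              exact lt_irrefl _ hℓ
            have h6 : ⌊T π p⌋₊ ≤ (τ ℓ : ℕ) := by
              have h7 : T π p < (((τ ℓ:ℕ) + 1 : ℕ):ℝ) := by push_cast; linarith
              have h8 := (Nat.floor_lt (T_nonneg p)).2 h7
              omega
            rw [Fin.le_def, hτx0]
            exact h6
          · have h6 : k ≤ (τ ℓ:ℕ) := not_lt.1 (fun hlt => hℓX ((hτ ℓ).1 hlt))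
            rw [Fin.le_def, hτx0]
            omega
        have huniq : ∀ j, eats π (R π p) i j → j = x0 := fun j hj => eats_unique hj heatsi
        have hNOXp := hNOX p hb ha
        have hrate_x0 : rate π (R π p) x0 = 1 := by
          unfold rate
          rw [show (Finset.univ.filter fun h => eats π (R π p) h x0) = {i} from ?_]
          · exact Finset.card_singleton i
          · ext h
            simp only [Finset.mem_filter, Finset.mem_univ, true_and, Finset.mem_singleton]
            constructor
            · intro hh
              by_contra hne
              exact hNOXp h hne x0 hx0X hh
            · rintro rfl; exact heatsi
        have hrate_X : ∀ x ∈ X, x ≠ x0 → rate π (R π p) x = 0 := by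
          intro x hx hne
          unfold rate
          rw [Finset.card_eq_zero, Finset.filter_eq_empty_iff]
          intro h _ hh
          by_cases hhi : h = i
          · subst hhi; exact hne (huniq x hh)
          · exact hNOXp h hhi x hx hh
        have hδle : delta π (R π p) ≤ ((⌊T π p⌋₊:ℕ):ℝ) + 1 - T π p := by
          have h5 := delta_mul_rate_le (π := π) (r := R π p) (R_nonneg p) x0
          rw [hrate_x0] at h5
          rw [hRx0] at h5
          push_cast at h5
          linarith
        have hT1 : T π (p+1) ≤ ((⌊T π p⌋₊:ℕ):ℝ) + 1 := by rw [hTs]; linarith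
        have hflk : ((⌊T π p⌋₊:ℕ):ℝ) + 1 ≤ (k:ℝ) := by
          have : (⌊T π p⌋₊:ℕ) + 1 ≤ k := hfl3
          exact_mod_cast this
        have hT1k : T π (p+1) ≤ (k:ℝ) := le_trans hT1 hflk
        have hTp1m : T π (p+1) ≤ (m:ℝ)/(n:ℝ) := by linarith
        constructor
        · -- (a) at p+1
          intro _ j hjX
          by_cases hzero : ∃ s, T π p ≤ s ∧ s ≤ T π (p+1) ∧ E.q j s = 0
          · obtain ⟨s, hs1, hs2, hs3⟩ := hzero
            have h4 : E.q j (T π (p+1)) ≤ 0 := by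
              have h5 := E_q_mono E j (le_trans (T_nonneg p) hs1) hs2 hTp1m
              linarith
            exact le_trans h4 (R_nonneg (p+1) j)
          · push_neg at hzero
            have hpos' : ∀ s, T π p ≤ s → s ≤ T π (p+1) → 0 < E.q j s := by
              intro s hs1 hs2
              have h0s : 0 ≤ s := le_trans (T_nonneg p) hs1
              rcases lt_or_eq_of_le ((E.q_mem j s ⟨h0s, le_trans hs2 hTp1m⟩).1) with h | h
              · exact h
              · exact absurd h.symm (hzero s hs1 hs2)
            have hrs : ∀ s, T π p ≤ s → s < T π (p+1) →
                ((rate π (R π p) j : ℕ):ℝ) ≤ ∑ h', E.c h' j s := by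
              intro s hs1 hs2
              have hc1 : ∀ h' ∈ (Finset.univ.filter fun h' => eats π (R π p) h' j),
                  E.c h' j s = 1 := by
                intro h' hh'
                have hh'e : eats π (R π p) h' j := (Finset.mem_filter.1 hh').2
                have hh'i : h' ≠ i := by
                  rintro rfl
                  exact hjX (by rw [huniq j hh'e]; exact hx0X)
                exact hCC p hTk.le (ha hTk.le) h' hh'i j hjX hh'e s hs1
                  (by linarith : s < q - 1) (hpos' s hs1 hs2.le)
              have e1 : ((rate π (R π p) j : ℕ):ℝ)
                  = ∑ _h' ∈ (Finset.univ.filter fun h' => eats π (R π p) h' j), (1:ℝ) := by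
                rw [Finset.sum_const, nsmul_eq_mul, mul_one]
                rfl
              rw [e1]
              rw [show (∑ _h' ∈ (Finset.univ.filter fun h' => eats π (R π p) h' j), (1:ℝ))
                  = ∑ h' ∈ (Finset.univ.filter fun h' => eats π (R π p) h' j), E.c h' j s from
                Finset.sum_congr rfl fun h' hh' => (hc1 h' hh').symm]
              exact Finset.sum_le_sum_of_subset_of_nonneg (Finset.filter_subset _ _)
                (fun h' _ _ => E.c_nonneg h' j s)
            have hsub : Set.uIcc (T π p) (T π (p+1)) ⊆ Set.uIcc 0 ((m:ℝ)/(n:ℝ)) := by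
              rw [Set.uIcc_of_le hT01, Set.uIcc_of_le hdivnn]
              exact Set.Icc_subset_Icc (T_nonneg p) hTp1m
            have hint : (T π (p+1) - T π p) * ((rate π (R π p) j:ℕ):ℝ)
                ≤ ∫ s in (T π p)..(T π (p+1)), ∑ h', E.c h' j s :=
              integral_ge_of_Ico hT01 (E_rho_integrable E j hsub) hrs
            have hsplit := E_q_split E j (T_nonneg p) hT01 hTp1m
            have haj := ha hTk.le j hjX
            have hfinal : R π (p+1) j
                = R π p j - delta π (R π p) * ((rate π (R π p) j:ℕ):ℝ) := by
              rw [R_succ]; rfl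
            have hδeq : T π (p+1) - T π p = delta π (R π p) := by rw [hTs]; ring
            rw [hfinal, hsplit, ← hδeq]
            linarith
        · -- (b) at p+1
          intro x hx
          by_cases hxx : x = x0
          · subst hxx
            have h5 : R π (p+1) x0
                = R π p x0 - delta π (R π p) * ((rate π (R π p) x0:ℕ):ℝ) := by
              rw [R_succ]; rfl
            rw [h5, hrate_x0, hRx0, hτx0]
            push_cast
            have h1 : ((⌊T π p⌋₊:ℕ):ℝ) + 1 - T π (p+1) ≤ 1 := by
              rw [hTs]; push_cast; linarith
            have h2 : (0:ℝ) ≤ ((⌊T π p⌋₊:ℕ):ℝ) + 1 - T π (p+1) := by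
              push_cast at hT1 ⊢; linarith
            rw [min_eq_right h1, max_eq_right h2]
            rw [hTs]; push_cast; ring
          · have hre : R π (p+1) x = R π p x := by
              rw [R_succ]
              show R π p x - delta π (R π p) * ((rate π (R π p) x:ℕ):ℝ) = R π p x
              rw [hrate_X x hx hxx]
              push_cast; ring
            rw [hre, hb x hx]
            have hτne : (τ x:ℕ) ≠ ⌊T π p⌋₊ := by
              intro hc
              apply hxx
              apply τ.injective
              apply Fin.ext
              rw [hτx0]; exact hc
            rcases Nat.lt_or_ge (τ x:ℕ) ⌊T π p⌋₊ with hlt | hge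
            · have h1 : ((τ x:ℕ):ℝ) + 1 - T π p ≤ 0 := by
                have h5 : ((τ x:ℕ):ℝ) + 1 ≤ ((⌊T π p⌋₊:ℕ):ℝ) := by exact_mod_cast hlt
                linarith
              have h2 : ((τ x:ℕ):ℝ) + 1 - T π (p+1) ≤ 0 := by linarith
              rw [max_eq_left (le_trans (min_le_right _ _) h1),
                max_eq_left (le_trans (min_le_right _ _) h2)]
            · have hgt : ⌊T π p⌋₊ < (τ x:ℕ) := lt_of_le_of_ne hge (Ne.symm hτne)
              have h5 : ((⌊T π p⌋₊:ℕ):ℝ) + 1 ≤ ((τ x:ℕ):ℝ) := by exact_mod_cast hgt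
              have h1 : (1:ℝ) ≤ ((τ x:ℕ):ℝ) + 1 - T π p := by linarith
              have h2 : (1:ℝ) ≤ ((τ x:ℕ):ℝ) + 1 - T π (p+1) := by linarith
              rw [min_eq_left h1, min_eq_left h2]
      · -- frozen case
        push_neg at hTk
        have hbz : ∀ x ∈ X, R π p x = 0 := by
          intro x hx
          rw [hb x hx]
          have hνk : ((τ x:ℕ):ℝ) + 1 ≤ (k:ℝ) := by
            have h5 : (τ x:ℕ) + 1 ≤ k := hν x hx
            exact_mod_cast h5
          exact max_eq_left (le_trans (min_le_right _ _) (by linarith))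
        constructor
        · intro hTk1 j hjX
          have hTeq : T π (p+1) = T π p := le_antisymm (hTk1.trans hTk) hT01
          have hδz : delta π (R π p) = 0 := by rw [hTs] at hTeq; linarith
          have h5 : R π (p+1) j = R π p j := by
            rw [R_succ]
            show R π p j - delta π (R π p) * ((rate π (R π p) j:ℕ):ℝ) = R π p j
            rw [hδz]; ring
          rw [hTeq, h5]
          exact ha (le_trans hT01 hTk1) j hjX
        · intro x hx
          have hrz : rate π (R π p) x = 0 := by
            unfold rate
            rw [Finset.card_eq_zero, Finset.filter_eq_empty_iff]
            intro h _ hh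
            have h5 := hh.1
            rw [hbz x hx] at h5
            exact lt_irrefl _ h5
          have h1 : R π (p+1) x = R π p x := by
            rw [R_succ]
            show R π p x - delta π (R π p) * ((rate π (R π p) x:ℕ):ℝ) = R π p x
            rw [hrz]; push_cast; ring
          rw [h1, hbz x hx]
          have hνk : ((τ x:ℕ):ℝ) + 1 ≤ (k:ℝ) := by
            have h5 : (τ x:ℕ) + 1 ≤ k := hν x hx
            exact_mod_cast h5
          symm
          exact max_eq_left (le_trans (min_le_right _ _) (by linarith))
  -- final extraction
  set E' := psE π hn with hE'
  have hNOXall : ∀ p h, h ≠ i → ∀ x ∈ X, ¬ eats π (R π p) h x :=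
    fun p => hNOX p (hmain p).2 (hmain p).1
  have hccz : ∀ h, h ≠ i → ∀ x ∈ X, ∀ t, cc π h x t = 0 := by
    intro h hhi x hx t
    unfold cc
    apply Finset.sum_eq_zero
    intro p _
    rw [if_neg]
    rintro ⟨-, -, he⟩
    exact hNOXall p h hhi x hx he
  have hTm : T π m = (m:ℝ)/(n:ℝ) := T_m hn
  have hint1 : ∀ x ∈ X, (∫ s in (0:ℝ)..((m:ℝ)/(n:ℝ)), (∑ h, cc π h x s)) = 1 := by
    intro x hx
    have h0 : Q π x (T π m) = R π m x := Q_at_T m le_rfl x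
    rw [R_m_eq_zero hn x] at h0
    unfold Q at h0
    rw [hTm] at h0
    linarith
  have hinti : ∀ x ∈ X, (∫ s in (0:ℝ)..((m:ℝ)/(n:ℝ)), cc π i x s) = 1 := by
    intro x hx
    have hsum : (∫ s in (0:ℝ)..((m:ℝ)/(n:ℝ)), (∑ h, cc π h x s))
        = ∑ h, ∫ s in (0:ℝ)..((m:ℝ)/(n:ℝ)), cc π h x s :=
      intervalIntegral.integral_finset_sum (μ := volume) (a := (0:ℝ)) (b := (m:ℝ)/(n:ℝ))
        (s := Finset.univ) (f := fun h s => cc π h x s)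
        (fun h _ => cc_intervalIntegrable h x _ _)
    rw [hint1 x hx] at hsum
    rw [Finset.sum_eq_single i] at hsum
    · exact hsum.symm
    · intro h _ hhi
      have hzz : ∀ s, cc π h x s = 0 := hccz h hhi x hx
      simp only [hzz]
      exact intervalIntegral.integral_zero
    · intro habs; exact absurd (Finset.mem_univ i) habs
  have hpayE' : ∑ j ∈ X, v' i j ≤ E'.payoff v' i := by
    have hpd : E'.payoff v' i = ∑ j, v' i j * ∫ s in (0:ℝ)..((m:ℝ)/(n:ℝ)), cc π i j s := rfl
    rw [hpd]
    have h1 : ∑ j ∈ X, v' i j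
        = ∑ j ∈ X, v' i j * ∫ s in (0:ℝ)..((m:ℝ)/(n:ℝ)), cc π i j s := by
      refine Finset.sum_congr rfl fun x hx => ?_
      rw [hinti x hx, mul_one]
    rw [h1]
    apply Finset.sum_le_sum_of_subset_of_nonneg (Finset.subset_univ X)
    intro j _ _
    exact mul_nonneg ((hv' i).1 j)
      (intervalIntegral.integral_nonneg hdivnn (fun s _ => cc_nonneg i j s))
  exact le_trans hpayE' (hNE i τ E')
end
end

section
/- For the one-sided allocation problem, the pure price of stability of any mechanism with a safety strategy is Ω(√n). Precisely: let n ≥ 4 be a perfect square, m = n, and let M be any mechanism possessing a safety strategy. Define true unit-sum valuations v′ by: v′_i(j) = 1 if i = j ≤ √n; v′_i(j) = 1/√n if i > √n and j ≤ √n; v′_i(j) = 0 otherwise. Then every profile that is a pure Nash equilibrium of M with respect to v′ has social welfare at most 2, while OPT(v′) = √n. In particular the pure price of stability of every mechanism with a safety strategy is at least √n/2. -/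
noncomputable section

/-- The mechanism `p` has a safety strategy: for every agent `i` and every true unit-sum
valuation `v'ᵢ` there is a unit-sum report `u` such that whatever the others report, for
every `k ∈ {1,…,m}` and every set `T` of `k` items with the `k` highest `v'ᵢ`-values,
agent `i` receives the items of `T` with total probability at least `k/n`. -/
def HasSafetyStrategy (n m : ℕ) (p : (Fin n → Fin m → ℝ) → Fin n → Fin m → ℝ) : Prop :=
  ∀ (i : Fin n) (v'i : Fin m → ℝ), IsUnitSum v'i →
    ∃ u : Fin m → ℝ, IsUnitSum u ∧
      ∀ v : Fin n → Fin m → ℝ, (∀ i', IsUnitSum (v i')) → v i = u →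
        ∀ k : ℕ, 1 ≤ k → k ≤ m →
          ∀ T : Finset (Fin m), T.card = k →
            (∀ a ∈ T, ∀ b, b ∉ T → v'i b ≤ v'i a) →
            (k : ℝ) / (n : ℝ) ≤ ∑ j ∈ T, p v i j

/-- **The pure price of stability of any mechanism with a safety strategy is `Ω(√n)`.**
With `n = m = r²` (`r ≥ 2`) and true valuations `v'` given by: `v'ᵢ(j) = 1` if
`i = j < r`, `v'ᵢ(j) = 1/r` if `i ≥ r` and `j < r`, and `v'ᵢ(j) = 0` otherwise, the
optimal welfare is `√n = r`, but every pure Nash equilibrium of a mechanism with a safety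
strategy has social welfare at most `2`. -/
theorem safety_strategy_pos_lower (r : ℕ) (hr : 2 ≤ r)
    (p : (Fin (r ^ 2) → Fin (r ^ 2) → ℝ) → Fin (r ^ 2) → Fin (r ^ 2) → ℝ)
    (hmech : IsMechanism (r ^ 2) (r ^ 2) p)
    (hsafe : HasSafetyStrategy (r ^ 2) (r ^ 2) p)
    (v' : Fin (r ^ 2) → Fin (r ^ 2) → ℝ)
    (hv' : ∀ i j, v' i j =
      if (i : ℕ) = (j : ℕ) ∧ (i : ℕ) < r then 1
      else if r ≤ (i : ℕ) ∧ (j : ℕ) < r then 1 / (r : ℝ) else 0) :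
    (∑ j, ⨆ i, v' i j) = (r : ℝ) ∧
    ∀ s : Fin (r ^ 2) → Fin (r ^ 2) → ℝ, IsMNash p v' s →
      ∑ i, Mpayoff p v' s i ≤ 2 := by
  classical
  have hr1 : 1 ≤ r := le_trans one_le_two hr
  have hrn : r ≤ r ^ 2 := by nlinarith
  have hrR : (2:ℝ) ≤ (r:ℝ) := by exact_mod_cast hr
  have hrpos : (0:ℝ) < (r:ℝ) := by linarith
  have hrne : (r:ℝ) ≠ 0 := ne_of_gt hrpos
  haveI : NeZero (r ^ 2) := ⟨by positivity⟩
  set T : Finset (Fin (r ^ 2)) := Finset.univ.filter (fun j : Fin (r ^ 2) => (j : ℕ) < r)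
    with hTdef
  have hfil : (Finset.range (r ^ 2)).filter (fun j => j < r) = Finset.range r := by
    ext x; simp only [Finset.mem_filter, Finset.mem_range]; omega
  have hTcard : T.card = r := by
    rw [hTdef, Finset.card_filter]
    rw [Fin.sum_univ_eq_sum_range (fun j => if j < r then 1 else 0)]
    rw [← Finset.sum_filter, hfil, Finset.sum_const, Finset.card_range, smul_eq_mul, mul_one]
  have hv'le1 : ∀ i j, v' i j ≤ 1 := by
    intro i j
    rw [hv']
    split_ifs with h1 h2
    · exact le_refl 1
    · rw [div_le_one hrpos]; linarith
    · norm_num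
  have hvbig : ∀ i : Fin (r ^ 2), r ≤ (i : ℕ) →
      ∀ j, v' i j = if (j : ℕ) < r then 1 / (r:ℝ) else 0 := by
    intro i hi j
    rw [hv']
    have h1 : ¬((i : ℕ) = (j : ℕ) ∧ (i : ℕ) < r) := by omega
    rw [if_neg h1]
    by_cases hj : (j : ℕ) < r
    · rw [if_pos ⟨hi, hj⟩, if_pos hj]
    · rw [if_neg (fun h => hj h.2), if_neg hj]
  constructor
  · -- OPT = r
    have hsup : ∀ j : Fin (r ^ 2), (⨆ i, v' i j) = if (j : ℕ) < r then (1:ℝ) else 0 := by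
      intro j
      by_cases hj : (j : ℕ) < r
      · rw [if_pos hj]
        apply le_antisymm
        · exact ciSup_le (fun i => hv'le1 i j)
        · have hle : (1:ℝ) = v' ⟨(j:ℕ), lt_of_lt_of_le hj hrn⟩ j := by
            rw [hv']; simp [hj]
          rw [hle]
          exact le_ciSup (f := fun i => v' i j)
            (Set.Finite.bddAbove (Set.finite_range _)) _
      · rw [if_neg hj]
        have h0 : ∀ i, v' i j = 0 := by
          intro i
          rw [hv']
          split_ifs with h1 h2
          · exact absurd (h1.1 ▸ h1.2) hj
          · exact absurd h2.2 hj
          · rfl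
        simp only [h0]
        exact ciSup_const
    simp only [hsup]
    rw [← Finset.sum_filter, ← hTdef, Finset.sum_const, hTcard, nsmul_eq_mul, mul_one]
  · -- every Nash equilibrium has welfare ≤ 2
    intro s hs
    obtain ⟨hsuni, hnash⟩ := hs
    obtain ⟨hpos, hcol⟩ := hmech s hsuni
    have hvbiguni : ∀ i : Fin (r ^ 2), r ≤ (i : ℕ) → IsUnitSum (v' i) := by
      intro i hi
      constructor
      · intro j; rw [hvbig i hi]; split_ifs <;> positivity
      · simp only [hvbig i hi]
        rw [← Finset.sum_filter, ← hTdef, Finset.sum_const, hTcard, nsmul_eq_mul]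
        field_simp
    -- the payoff of a big agent under any reported profile
    have hpay_big : ∀ (w : Fin (r ^ 2) → Fin (r ^ 2) → ℝ) (i : Fin (r ^ 2)), r ≤ (i : ℕ) →
        Mpayoff p v' w i = (∑ j ∈ T, p w i j) * (1 / r) := by
      intro w i hi
      unfold Mpayoff
      rw [Finset.sum_mul, hTdef, Finset.sum_filter]
      apply Finset.sum_congr rfl
      intro j _
      rw [hvbig i hi]
      split_ifs <;> ring
    -- key: in equilibrium each big agent receives mass ≥ 1/r on T
    have hbig : ∀ i : Fin (r ^ 2), r ≤ (i : ℕ) →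
        (1:ℝ) / r ≤ ∑ j ∈ T, p s i j := by
      intro i hi
      obtain ⟨u, huni, hguar⟩ := hsafe i (v' i) (hvbiguni i hi)
      set v := Function.update s i u with hvdef
      have hvuni : ∀ i', IsUnitSum (v i') := by
        intro i'
        by_cases h : i' = i
        · subst h; rw [hvdef, Function.update_self]; exact huni
        · rw [hvdef, Function.update_of_ne h]; exact hsuni i'
      have htop : ∀ a ∈ T, ∀ b, b ∉ T → v' i b ≤ v' i a := by
        intro a ha b hb
        rw [hTdef] at ha hb
        simp only [Finset.mem_filter, Finset.mem_univ, true_and] at ha hb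
        rw [hvbig i hi, hvbig i hi, if_pos ha, if_neg hb]
        positivity
      have hgu := hguar v hvuni (Function.update_self i u s) r hr1 hrn T hTcard htop
      have hsq : ((r:ℕ):ℝ) / ((r ^ 2 : ℕ) : ℝ) = 1 / r := by
        push_cast; field_simp
      rw [hsq] at hgu
      have hne := hnash i u huni
      rw [← hvdef, hpay_big v i hi, hpay_big s i hi] at hne
      have h1r : (0:ℝ) < 1 / r := by positivity
      have hchain : (1/(r:ℝ)) * (1/r) ≤ (∑ j ∈ T, p s i j) * (1/r) :=
        le_trans (mul_le_mul_of_nonneg_right hgu (le_of_lt h1r)) hne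
      have := mul_le_mul_of_nonneg_right hchain (le_of_lt hrpos)
      calc (1:ℝ)/r = (1/r) * (1/r) * r := by field_simp
        _ ≤ (∑ j ∈ T, p s i j) * (1/r) * r := this
        _ = ∑ j ∈ T, p s i j := by field_simp
    -- per-agent payoff bound
    have hwelf : ∀ i : Fin (r ^ 2), Mpayoff p v' s i ≤
        if (i : ℕ) < r then ∑ j ∈ T, p s i j else (∑ j ∈ T, p s i j) * (1 / r) := by
      intro i
      by_cases hi : (i : ℕ) < r
      · rw [if_pos hi]
        unfold Mpayoff
        rw [hTdef, Finset.sum_filter]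
        apply Finset.sum_le_sum
        intro j _
        by_cases hj : (j : ℕ) < r
        · rw [if_pos hj]
          calc p s i j * v' i j ≤ p s i j * 1 :=
                mul_le_mul_of_nonneg_left (hv'le1 i j) (hpos i j)
            _ = p s i j := mul_one _
        · rw [if_neg hj]
          have hz : v' i j = 0 := by
            rw [hv']; split_ifs with h1 h2
            · omega
            · omega
            · rfl
          rw [hz, mul_zero]
      · rw [if_neg hi]
        exact le_of_eq (hpay_big s i (not_lt.mp hi))
    -- sum up
    have hBA : Finset.univ.filter (fun i : Fin (r ^ 2) => ¬ (i : ℕ) < r) =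
        Finset.univ.filter (fun i : Fin (r ^ 2) => ¬ (i : ℕ) < r) := rfl
    have hsum_split : ∑ i, Mpayoff p v' s i ≤
        (∑ i ∈ T, ∑ j ∈ T, p s i j) +
        (∑ i ∈ Finset.univ.filter (fun i : Fin (r ^ 2) => ¬ (i : ℕ) < r),
          ∑ j ∈ T, p s i j) * (1/r) := by
      calc ∑ i, Mpayoff p v' s i
          ≤ ∑ i : Fin (r ^ 2),
              (if (i : ℕ) < r then ∑ j ∈ T, p s i j else (∑ j ∈ T, p s i j) * (1 / r)) :=
            Finset.sum_le_sum (fun i _ => hwelf i)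
        _ = _ := by
            rw [Finset.sum_ite, ← hTdef, Finset.sum_mul]
    set A : ℝ := ∑ i ∈ T, ∑ j ∈ T, p s i j with hAdef
    set B : ℝ := ∑ i ∈ Finset.univ.filter (fun i : Fin (r ^ 2) => ¬ (i : ℕ) < r),
      ∑ j ∈ T, p s i j with hBdef
    have hAB : A + B = r := by
      rw [hAdef, hBdef, hTdef, Finset.sum_filter_add_sum_filter_not]
      rw [Finset.sum_comm]
      have h1 : ∀ j ∈ T, ∑ i, p s i j = 1 := fun j _ => hcol j
      rw [Finset.sum_congr rfl h1, Finset.sum_const, hTcard, nsmul_eq_mul, mul_one]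
    have hBAcard : (Finset.univ.filter (fun i : Fin (r ^ 2) => ¬ (i : ℕ) < r)).card
        = r ^ 2 - r := by
      have h := Finset.card_filter_add_card_filter_not
        (s := (Finset.univ : Finset (Fin (r ^ 2))))
        (p := fun i : Fin (r ^ 2) => (i : ℕ) < r)
      rw [← hTdef] at h
      have hu : (Finset.univ : Finset (Fin (r ^ 2))).card = r ^ 2 := by
        simp [Finset.card_univ]
      omega
    have hBlow : (r:ℝ) - 1 ≤ B := by
      have h1 : ∑ i ∈ Finset.univ.filter (fun i : Fin (r ^ 2) => ¬ (i : ℕ) < r),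
          (1:ℝ)/r ≤ B := by
        rw [hBdef]
        apply Finset.sum_le_sum
        intro i hi
        simp only [Finset.mem_filter, Finset.mem_univ, true_and, not_lt] at hi
        exact hbig i hi
      rw [Finset.sum_const, hBAcard, nsmul_eq_mul] at h1
      have hc : ((r ^ 2 - r : ℕ):ℝ) = (r:ℝ)^2 - r := by
        rw [Nat.cast_sub hrn]; push_cast; ring
      rw [hc] at h1
      have h2 : ((r:ℝ)^2 - r) * (1/r) = (r:ℝ) - 1 := by field_simp
      linarith [h2 ▸ h1]
    have hA0 : 0 ≤ A := by
      rw [hAdef]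
      apply Finset.sum_nonneg
      intro i _
      exact Finset.sum_nonneg (fun j _ => hpos i j)
    have hA1 : A ≤ 1 := by linarith
    have hBr : B ≤ r := by linarith
    have hB1 : B * (1/r) ≤ 1 := by
      rw [mul_one_div, div_le_one hrpos]; exact hBr
    linarith
end
end

section
/- For the asymmetric one-sided allocation problem with multi-unit demand agents, the price of anarchy of Random Priority is at least n when m ≥ n². Precisely: let n ≥ 2, m = n², and ε ∈ (0, 1/2). Define unit-sum true valuations by v′_i(i) = 1 − ε, v′_i(j) = ε/(n−1) for j ∈ {1,…,n} \ {i}, and v′_i(j) = 0 for n < j ≤ m. Then truthful reporting is a pure Nash equilibrium of Random Priority, its social welfare equals 1 (for every realized agent ordering, the first agent receives true value 1 and every other agent receives true value 0), and OPT(v′) = n(1−ε). Hence the pure price of anarchy of Random Priority on these instances is at least n(1−ε). -/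
set_option linter.unusedSectionVars false


noncomputable section

/-- The set of items still available when the agent at position `pos` (in the random
ordering `π`) gets to pick, given the selection rule `g`. -/
def RPavail (n m : ℕ)
    (g : (Fin n → Fin m → ℝ) → Equiv.Perm (Fin n) → Fin n → Finset (Fin m))
    (v : Fin n → Fin m → ℝ) (π : Equiv.Perm (Fin n)) (pos : Fin n) : Finset (Fin m) :=
  Finset.univ \ (Finset.univ.filter (fun p' => p' < pos)).biUnion (fun p' => g v π (π p'))

/-- `g` is a Random Priority selection rule (with some fixed tie-breaking): for every
reported profile `v` and every ordering `π` of the agents, the agent at each position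
picks, from the items not yet taken, a set of `m/n` items of maximum total reported
value. -/
def IsRPSelection (n m : ℕ)
    (g : (Fin n → Fin m → ℝ) → Equiv.Perm (Fin n) → Fin n → Finset (Fin m)) : Prop :=
  ∀ (v : Fin n → Fin m → ℝ) (π : Equiv.Perm (Fin n)) (pos : Fin n),
    g v π (π pos) ⊆ RPavail n m g v π pos ∧
    (g v π (π pos)).card = m / n ∧
    ∀ S ⊆ RPavail n m g v π pos, S.card = m / n →
      ∑ j ∈ S, v (π pos) j ≤ ∑ j ∈ g v π (π pos), v (π pos) j

/-- Agent `i`'s expected payoff under Random Priority (the ordering of the agents being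
uniformly random) with selection rule `g`, true valuations `v'` and reports `v`. -/
def RPpayoff (n m : ℕ)
    (g : (Fin n → Fin m → ℝ) → Equiv.Perm (Fin n) → Fin n → Finset (Fin m))
    (v' v : Fin n → Fin m → ℝ) (i : Fin n) : ℝ :=
  (∑ π : Equiv.Perm (Fin n), ∑ j ∈ g v π i, v' i j) / (Nat.factorial n : ℝ)

/-- The reported profile `v` is a pure Nash equilibrium of Random Priority with respect to
the true valuations `v'`. -/
def IsRPNash (n m : ℕ)
    (g : (Fin n → Fin m → ℝ) → Equiv.Perm (Fin n) → Fin n → Finset (Fin m))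
    (v' v : Fin n → Fin m → ℝ) : Prop :=
  ∀ (i : Fin n) (w : Fin m → ℝ), IsUnitSum w →
    RPpayoff n m g v' (Function.update v i w) i ≤ RPpayoff n m g v' v i

def Tset (n : ℕ) : Finset (Fin (n ^ 2)) := Finset.univ.filter (fun j => (j : ℕ) < n)

lemma mem_Tset {n : ℕ} {j : Fin (n ^ 2)} : j ∈ Tset n ↔ (j : ℕ) < n := by
  simp [Tset]

lemma Tset_map (n : ℕ) (h : n ≤ n ^ 2) :
    Tset n = Finset.univ.map ⟨Fin.castLE h, Fin.castLE_injective h⟩ := by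
  ext j
  simp only [mem_Tset, Finset.mem_map, Finset.mem_univ, true_and,
    Function.Embedding.coeFn_mk]
  constructor
  · intro hj; exact ⟨⟨j, hj⟩, rfl⟩
  · rintro ⟨k, rfl⟩; exact k.isLt

lemma card_Tset (n : ℕ) (hn : 1 ≤ n) : (Tset n).card = n := by
  rw [Tset_map n (by nlinarith)]
  simp

section Vprime

variable {n : ℕ} (hn : 2 ≤ n) {ε : ℝ} (hε0 : 0 < ε) (hε1 : ε < 1 / 2)
  {v' : Fin n → Fin (n ^ 2) → ℝ}
  (hv' : ∀ i j, v' i j =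
      if (j : ℕ) = (i : ℕ) then 1 - ε
      else if (j : ℕ) < n then ε / ((n : ℝ) - 1) else 0)

include hn hε0 hε1 hv'

lemma vp_nonneg (i : Fin n) (j : Fin (n ^ 2)) : 0 ≤ v' i j := by
  rw [hv' i j]
  have h1 : (0:ℝ) < (n:ℝ) - 1 := by
    have : (2:ℝ) ≤ (n:ℝ) := by exact_mod_cast hn
    linarith
  split_ifs
  · linarith
  · positivity
  · exact le_refl 0

lemma vp_pos (i : Fin n) {j : Fin (n ^ 2)} (hj : (j : ℕ) < n) : 0 < v' i j := by
  rw [hv' i j]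
  have h1 : (0:ℝ) < (n:ℝ) - 1 := by
    have : (2:ℝ) ≤ (n:ℝ) := by exact_mod_cast hn
    linarith
  by_cases h : (j : ℕ) = (i : ℕ)
  · rw [if_pos h]; linarith
  · rw [if_neg h, if_pos hj]; positivity

lemma vp_zero (i : Fin n) {j : Fin (n ^ 2)} (hj : ¬ (j : ℕ) < n) : v' i j = 0 := by
  have hne : ¬ (j : ℕ) = (i : ℕ) := by have := i.isLt; omega
  rw [hv' i j, if_neg hne, if_neg hj]

lemma vp_sum_T (i : Fin n) : ∑ j ∈ Tset n, v' i j = 1 := by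
  have h1 : (0:ℝ) < (n:ℝ) - 1 := by
    have : (2:ℝ) ≤ (n:ℝ) := by exact_mod_cast hn
    linarith
  rw [Tset_map n (by nlinarith), Finset.sum_map]
  simp only [Function.Embedding.coeFn_mk]
  have hval : ∀ k : Fin n, v' i (Fin.castLE (by nlinarith) k)
      = if k = i then 1 - ε else ε / ((n:ℝ) - 1) := by
    intro k
    rw [hv' i _]
    simp only [Fin.coe_castLE]
    by_cases hk : k = i
    · rw [if_pos (by rw [hk]), if_pos hk]
    · rw [if_neg (by simp [Fin.val_eq_val] at *; exact hk), if_neg hk, if_pos k.isLt]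
  rw [Finset.sum_congr rfl (fun k _ => hval k)]
  rw [← Finset.add_sum_erase _ _ (Finset.mem_univ i), if_pos rfl,
    Finset.sum_congr rfl (fun k hk => if_neg (Finset.ne_of_mem_erase hk)),
    Finset.sum_const, Finset.card_erase_of_mem (Finset.mem_univ i),
    Finset.card_univ, Fintype.card_fin, nsmul_eq_mul]
  have hc : ((n - 1 : ℕ) : ℝ) = (n : ℝ) - 1 := by
    push_cast [Nat.cast_sub (by omega : 1 ≤ n)]; ring
  rw [hc]
  field_simp
  ring


lemma vp_sum_all (i : Fin n) : ∑ j, v' i j = 1 := by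
  classical
  rw [← Finset.sum_filter_add_sum_filter_not Finset.univ (fun j : Fin (n ^ 2) => (j : ℕ) < n)]
  have h2 : ∑ j ∈ Finset.univ.filter (fun j : Fin (n ^ 2) => ¬ (j : ℕ) < n), v' i j = 0 :=
    Finset.sum_eq_zero (fun j hj => vp_zero hn hε0 hε1 hv' i (Finset.mem_filter.mp hj).2)
  rw [h2, add_zero]
  exact vp_sum_T hn hε0 hε1 hv' i

variable {g : (Fin n → Fin (n ^ 2) → ℝ) → Equiv.Perm (Fin n) → Fin n → Finset (Fin (n ^ 2))}
  (hg : IsRPSelection n (n ^ 2) g)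

include hg

lemma firstpick (v : Fin n → Fin (n ^ 2) → ℝ) (π : Equiv.Perm (Fin n))
    (h0 : 0 < n) (hv : v (π ⟨0, h0⟩) = v' (π ⟨0, h0⟩)) :
    g v π (π ⟨0, h0⟩) = Tset n := by
  classical
  set a := π (⟨0, h0⟩ : Fin n) with ha
  obtain ⟨hsub, hcard, hopt⟩ := hg v π ⟨0, h0⟩
  have havail : RPavail n (n ^ 2) g v π ⟨0, h0⟩ = Finset.univ := by
    unfold RPavail
    have he : (Finset.univ.filter (fun p' : Fin n => p' < (⟨0, h0⟩ : Fin n))) = ∅ := by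
      ext p'; simp [Fin.lt_def]
    rw [he]; simp
  have hdiv : n ^ 2 / n = n := by
    rw [pow_two, Nat.mul_div_cancel_left _ (by omega)]
  rw [hdiv] at hcard hopt
  have hTcard : (Tset n).card = n := card_Tset n (by omega)
  have hle := hopt (Tset n) (by rw [havail]; exact Finset.subset_univ _) hTcard
  rw [hv] at hle
  have hsumT : ∑ j ∈ Tset n, v' a j = 1 := vp_sum_T hn hε0 hε1 hv' a
  have hub : ∑ j ∈ g v π a, v' a j ≤ 1 := by
    rw [← vp_sum_all hn hε0 hε1 hv' a]
    exact Finset.sum_le_sum_of_subset_of_nonneg (Finset.subset_univ _)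
      (fun j _ _ => vp_nonneg hn hε0 hε1 hv' a j)
  have heq : ∑ j ∈ g v π a, v' a j = 1 := le_antisymm hub (hsumT ▸ hle)
  have hTS : Tset n ⊆ g v π a := by
    intro t ht
    by_contra hts
    have hS' : g v π a ⊆ Finset.univ.erase t :=
      fun j hj => Finset.mem_erase.mpr ⟨fun h => hts (h ▸ hj), Finset.mem_univ j⟩
    have : ∑ j ∈ g v π a, v' a j ≤ ∑ j ∈ Finset.univ.erase t, v' a j :=
      Finset.sum_le_sum_of_subset_of_nonneg hS'
        (fun j _ _ => vp_nonneg hn hε0 hε1 hv' a j)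
    rw [Finset.sum_erase_eq_sub (Finset.mem_univ t), vp_sum_all hn hε0 hε1 hv' a] at this
    have hpos := vp_pos hn hε0 hε1 hv' a (mem_Tset.mp ht)
    rw [heq] at this
    linarith
  exact (Finset.eq_of_subset_of_card_le hTS (by rw [hcard, hTcard])).symm

lemma laterzero (v : Fin n → Fin (n ^ 2) → ℝ) (π : Equiv.Perm (Fin n))
    (h0 : 0 < n) (hv : v (π ⟨0, h0⟩) = v' (π ⟨0, h0⟩))
    (pos : Fin n) (hpos : pos ≠ ⟨0, h0⟩) (i : Fin n) :
    ∑ j ∈ g v π (π pos), v' i j = 0 := by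
  classical
  apply Finset.sum_eq_zero
  intro j hj
  have hav := (hg v π pos).1 hj
  simp only [RPavail, Finset.mem_sdiff, Finset.mem_biUnion, Finset.mem_filter,
    Finset.mem_univ, true_and, not_exists, not_and] at hav

  have hlt : (⟨0, h0⟩ : Fin n) < pos := by
    have h1 : (pos : ℕ) ≠ 0 := fun h => hpos (Fin.ext h)
    exact Fin.lt_def.mpr (by simpa using Nat.pos_of_ne_zero h1)
  have hj0 := hav ⟨0, h0⟩ hlt
  rw [firstpick hn hε0 hε1 hv' hg v π h0 hv] at hj0
  exact vp_zero hn hε0 hε1 hv' i (fun h => hj0 (mem_Tset.mpr h))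

end Vprime

/-- **The price of anarchy of Random Priority is at least `n` when `m ≥ n²`.**
With `m = n²`, `ε ∈ (0, 1/2)`, and true valuations `v'ᵢ(i) = 1 − ε`,
`v'ᵢ(j) = ε/(n−1)` for the other items `j < n`, and `v'ᵢ(j) = 0` for `j ≥ n`:
truthful reporting is a pure Nash equilibrium of Random Priority; for every realized
ordering the first agent receives true value `1` and every other agent receives true
value `0`; the social welfare of truthful reporting equals `1`; and
`OPT(v') = n·(1 − ε)`. -/
theorem rp_poa_lower (n : ℕ) (hn : 2 ≤ n)
    (ε : ℝ) (hε0 : 0 < ε) (hε1 : ε < 1 / 2)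
    (g : (Fin n → Fin (n ^ 2) → ℝ) → Equiv.Perm (Fin n) → Fin n → Finset (Fin (n ^ 2)))
    (hg : IsRPSelection n (n ^ 2) g)
    (v' : Fin n → Fin (n ^ 2) → ℝ)
    (hv' : ∀ i j, v' i j =
      if (j : ℕ) = (i : ℕ) then 1 - ε
      else if (j : ℕ) < n then ε / ((n : ℝ) - 1) else 0) :
    (∀ i, IsUnitSum (v' i)) ∧
    IsRPNash n (n ^ 2) g v' v' ∧
    (∀ π : Equiv.Perm (Fin n),
      (∑ j ∈ g v' π (π ⟨0, by omega⟩), v' (π ⟨0, by omega⟩) j) = 1 ∧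
      ∀ pos : Fin n, pos ≠ ⟨0, by omega⟩ →
        (∑ j ∈ g v' π (π pos), v' (π pos) j) = 0) ∧
    (∑ i, RPpayoff n (n ^ 2) g v' v' i) = 1 ∧
    (∑ j, ⨆ i, v' i j) = (n : ℝ) * (1 - ε) := by
  classical
  have h0 : 0 < n := by omega
  have hne : Nonempty (Fin n) := ⟨⟨0, h0⟩⟩
  have hUS : ∀ i, IsUnitSum (v' i) :=
    fun i => ⟨vp_nonneg hn hε0 hε1 hv' i, vp_sum_all hn hε0 hε1 hv' i⟩
  have hfirst : ∀ π : Equiv.Perm (Fin n),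
      (∑ j ∈ g v' π (π ⟨0, h0⟩), v' (π ⟨0, h0⟩) j) = 1 := by
    intro π
    rw [firstpick hn hε0 hε1 hv' hg v' π h0 rfl]
    exact vp_sum_T hn hε0 hε1 hv' _
  have hlater : ∀ (π : Equiv.Perm (Fin n)) (pos : Fin n), pos ≠ ⟨0, h0⟩ → ∀ i,
      (∑ j ∈ g v' π (π pos), v' i j) = 0 :=
    fun π pos hpos i => laterzero hn hε0 hε1 hv' hg v' π h0 rfl pos hpos i
  have hfacpos : (0:ℝ) < (Nat.factorial n : ℝ) := by
    exact_mod_cast Nat.factorial_pos n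
  refine ⟨hUS, ?_, fun π => ⟨hfirst π, fun pos hpos => hlater π pos hpos _⟩, ?_, ?_⟩
  · -- Nash
    intro i w hw
    unfold RPpayoff
    set u := Function.update v' i w with hu
    apply div_le_div_of_nonneg_right _ hfacpos.le
    apply Finset.sum_le_sum
    intro π _
    by_cases hcase : π ⟨0, h0⟩ = i
    · have hub : ∑ j ∈ g u π i, v' i j ≤ 1 := by
        rw [← vp_sum_all hn hε0 hε1 hv' i]
        exact Finset.sum_le_sum_of_subset_of_nonneg (Finset.subset_univ _)
          (fun j _ _ => vp_nonneg hn hε0 hε1 hv' i j)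
      have heq : ∑ j ∈ g v' π i, v' i j = 1 := by
        rw [← hcase]; exact hfirst π
      linarith
    · have hpos' : π.symm i ≠ ⟨0, h0⟩ := by
        intro h
        exact hcase (by rw [← h, Equiv.apply_symm_apply])
      have hu0 : u (π ⟨0, h0⟩) = v' (π ⟨0, h0⟩) := Function.update_of_ne hcase w v'
      have hz := laterzero hn hε0 hε1 hv' hg u π h0 hu0 (π.symm i) hpos' i
      rw [Equiv.apply_symm_apply] at hz
      have hnn : 0 ≤ ∑ j ∈ g v' π i, v' i j :=
        Finset.sum_nonneg (fun j _ => vp_nonneg hn hε0 hε1 hv' i j)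
      linarith
  · -- welfare
    have hterm : ∀ π : Equiv.Perm (Fin n), ∑ i, ∑ j ∈ g v' π i, v' i j = 1 := by
      intro π
      rw [← Equiv.sum_comp π (fun i => ∑ j ∈ g v' π i, v' i j)]
      rw [Finset.sum_eq_single_of_mem ⟨0, h0⟩ (Finset.mem_univ _)
        (fun pos _ hpos => hlater π pos hpos _)]
      exact hfirst π
    unfold RPpayoff
    rw [← Finset.sum_div, Finset.sum_comm,
      Finset.sum_congr rfl (fun π _ => hterm π), Finset.sum_const, Finset.card_univ,
      Fintype.card_perm, Fintype.card_fin, nsmul_eq_mul, mul_one, div_self (ne_of_gt hfacpos)]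
  · -- OPT
    have hBdd : ∀ j : Fin (n ^ 2), BddAbove (Set.range (fun i => v' i j)) :=
      fun j => (Set.finite_range _).bddAbove
    have hn1 : (1:ℝ) ≤ (n:ℝ) - 1 := by
      have : (2:ℝ) ≤ (n:ℝ) := by exact_mod_cast hn
      linarith
    have hsup : ∀ j : Fin (n ^ 2), (⨆ i, v' i j) = if (j : ℕ) < n then 1 - ε else 0 := by
      intro j
      by_cases hj : (j : ℕ) < n
      · rw [if_pos hj]
        apply le_antisymm
        · apply ciSup_le
          intro i
          rw [hv' i j]
          have hd : ε / ((n:ℝ) - 1) ≤ ε := div_le_self hε0.le hn1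
          split_ifs <;> linarith
        · have hle := le_ciSup (hBdd j) (⟨(j : ℕ), hj⟩ : Fin n)
          have hval : v' (⟨(j : ℕ), hj⟩ : Fin n) j = 1 - ε := by
            rw [hv', if_pos rfl]
          rw [hval] at hle
          exact hle
      · rw [if_neg hj]
        have hz : ∀ i, v' i j = 0 := fun i => vp_zero hn hε0 hε1 hv' i hj
        simp only [hz]
        exact ciSup_const
    rw [Finset.sum_congr rfl (fun j _ => hsup j), ← Finset.sum_filter,
      show (Finset.univ.filter fun j : Fin (n ^ 2) => (j : ℕ) < n) = Tset n from rfl,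
      Finset.sum_const, card_Tset n (by omega), nsmul_eq_mul]
end
end

section
/- (Equilibrium welfare is at least 1/4 in the symmetric case.) Let m = n, let v′ be unit-sum true valuations, and let v be a pure Nash equilibrium of Cardinal Probabilistic Serial with respect to v′. Then every agent's equilibrium payoff satisfies u_i(v) ≥ 1/(4n); consequently the social welfare of every pure Nash equilibrium is at least 1/4. -/
open MeasureTheory

noncomputable section

/-- A Cardinal Probabilistic Serial (CPS) execution for the profile `v` of reports by
`n` agents on `m` items.  `q j t` is the remaining quantity of item `j` at time `t` and
`c i j t` is the consumption rate of agent `i` on item `j` at time `t`. -/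
structure CPSExec (n m : ℕ) (v : Fin n → Fin m → ℝ) where
  q : Fin m → ℝ → ℝ
  c : Fin n → Fin m → ℝ → ℝ
  q_mem : ∀ j t, t ∈ Set.Icc (0 : ℝ) ((m : ℝ) / (n : ℝ)) → q j t ∈ Set.Icc (0 : ℝ) 1
  c_nonneg : ∀ i j t, 0 ≤ c i j t
  c_integrable : ∀ i j, IntervalIntegrable (c i j) volume 0 ((m : ℝ) / (n : ℝ))
  q_eq : ∀ j t, t ∈ Set.Icc (0 : ℝ) ((m : ℝ) / (n : ℝ)) →
    q j t = 1 - ∫ s in (0 : ℝ)..t, ∑ i, c i j s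
  c_zero : ∀ i j t, t ∈ Set.Icc (0 : ℝ) ((m : ℝ) / (n : ℝ)) → ¬ 0 < q j t → c i j t = 0
  c_prop : ∀ i j t, t ∈ Set.Icc (0 : ℝ) ((m : ℝ) / (n : ℝ)) → 0 < q j t →
    0 < ∑ ℓ ∈ Finset.univ.filter (fun ℓ => 0 < q ℓ t), v i ℓ →
    c i j t = v i j / ∑ ℓ ∈ Finset.univ.filter (fun ℓ => 0 < q ℓ t), v i ℓ
  c_sum : ∀ i t, t ∈ Set.Icc (0 : ℝ) ((m : ℝ) / (n : ℝ)) →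
    (Finset.univ.filter (fun ℓ => 0 < q ℓ t)).Nonempty →
    ∑ j ∈ Finset.univ.filter (fun ℓ => 0 < q ℓ t), c i j t = 1

/-- The consumption time of item `j`: the first time at which item `j` is exhausted. -/
def CPSExec.consTime {n m : ℕ} {v : Fin n → Fin m → ℝ} (E : CPSExec n m v) (j : Fin m) : ℝ :=
  sInf {t : ℝ | t ∈ Set.Icc (0 : ℝ) ((m : ℝ) / (n : ℝ)) ∧ E.q j t = 0}

/-- Agent `i`'s (expected) payoff under true valuations `v'`. -/
def CPSExec.payoff {n m : ℕ} {v : Fin n → Fin m → ℝ} (E : CPSExec n m v)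
    (v' : Fin n → Fin m → ℝ) (i : Fin n) : ℝ :=
  ∑ j, v' i j * ∫ s in (0 : ℝ)..((m : ℝ) / (n : ℝ)), E.c i j s

/-- The single-minded report `û_j` on item `j`. -/
def singleMinded {m : ℕ} (j : Fin m) : Fin m → ℝ := fun ℓ => if ℓ = j then 1 else 0

/-- The profile `v`, together with the fixed CPS execution `E`, is a pure Nash equilibrium
with respect to the true valuations `v'`: for every agent `i` and every unit-sum deviation
`w` there is a CPS execution of the deviated profile in which `i`'s payoff does not
increase (ties resolved adversarially against the deviator). -/
def IsCPSNash {n m : ℕ} (v' v : Fin n → Fin m → ℝ) (E : CPSExec n m v) : Prop :=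
  ∀ (i : Fin n) (w : Fin m → ℝ), IsUnitSum w →
    ∃ E' : CPSExec n m (Function.update v i w), E'.payoff v' i ≤ E.payoff v' i

namespace CPSAux

variable {n m : ℕ} {v : Fin n → Fin m → ℝ}

/-- geometric weights along a permutation -/
def gw (σ : Equiv.Perm (Fin m)) : Fin m → ℝ :=
  fun ℓ => ((2:ℝ)⁻¹) ^ ((σ.symm ℓ : Fin m) : ℕ) / ∑ j : Fin m, ((2:ℝ)⁻¹) ^ (j : ℕ)

lemma S_pos (hm : 1 ≤ m) : 0 < ∑ j : Fin m, ((2:ℝ)⁻¹) ^ (j : ℕ) := by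
  have : Nonempty (Fin m) := ⟨⟨0, hm⟩⟩
  exact Finset.sum_pos (fun j _ => by positivity) Finset.univ_nonempty

lemma gw_pos (hm : 1 ≤ m) (σ : Equiv.Perm (Fin m)) (ℓ : Fin m) : 0 < gw σ ℓ := by
  have := S_pos hm
  unfold gw; positivity

lemma gw_sum (hm : 1 ≤ m) (σ : Equiv.Perm (Fin m)) : ∑ ℓ, gw σ ℓ = 1 := by
  unfold gw
  rw [← Finset.sum_div]
  rw [Equiv.sum_comp σ.symm (fun k : Fin m => ((2:ℝ)⁻¹) ^ (k : ℕ))]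
  exact div_self (S_pos hm).ne'

lemma gw_tail (hm : 1 ≤ m) (σ : Equiv.Perm (Fin m)) (A : Finset (Fin m)) (b : Fin m)
    (hb : b ∈ A) (hmin : ∀ ℓ ∈ A, σ.symm b ≤ σ.symm ℓ) :
    ∑ ℓ ∈ A, gw σ ℓ ≤ 2 * gw σ b := by
  classical
  have hS := S_pos hm
  unfold gw
  rw [← Finset.sum_div, ← mul_div_assoc]
  gcongr
  have hinj : ∀ x ∈ A, ∀ y ∈ A,
      ((σ.symm x : Fin m) : ℕ) = ((σ.symm y : Fin m) : ℕ) → x = y :=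
    fun x _ y _ h => σ.symm.injective (Fin.val_injective h)
  rw [← Finset.sum_image (f := fun k : ℕ => ((2:ℝ)⁻¹) ^ k) hinj]
  have hsub : A.image (fun ℓ => ((σ.symm ℓ : Fin m) : ℕ)) ⊆
      Finset.Ico ((σ.symm b : Fin m) : ℕ) m := by
    intro k hk
    rcases Finset.mem_image.1 hk with ⟨ℓ, hℓ, rfl⟩
    exact Finset.mem_Ico.2 ⟨Fin.le_def.1 (hmin ℓ hℓ), (σ.symm ℓ).isLt⟩
  refine le_trans (Finset.sum_le_sum_of_subset_of_nonneg hsub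
    (fun _ _ _ => by positivity)) ?_
  rw [geom_sum_Ico (by norm_num : (2:ℝ)⁻¹ ≠ 1) (le_of_lt (σ.symm b).isLt)]
  have h1 : (0:ℝ) ≤ (2⁻¹:ℝ) ^ m := by positivity
  rw [div_le_iff_of_neg (by norm_num : (2:ℝ)⁻¹ - 1 < 0)]
  ring_nf
  nlinarith

lemma sum_c_le_one (E : CPSExec n m v) (i : Fin n) (t : ℝ)
    (ht : t ∈ Set.Icc (0:ℝ) ((m:ℝ)/(n:ℝ))) : ∑ j, E.c i j t ≤ 1 := by
  classical
  have h0 : ∑ j, E.c i j t = ∑ j ∈ Finset.univ.filter (fun ℓ => 0 < E.q ℓ t), E.c i j t := by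
    refine (Finset.sum_subset (Finset.filter_subset _ _) ?_).symm
    intro x _ hx
    simp only [Finset.mem_filter, Finset.mem_univ, true_and] at hx
    exact E.c_zero i x t ht hx
  rw [h0]
  by_cases hA : (Finset.univ.filter (fun ℓ => 0 < E.q ℓ t)).Nonempty
  · rw [E.c_sum i t ht hA]
  · rw [Finset.not_nonempty_iff_eq_empty.1 hA]; simp

lemma dead_card_le (E : CPSExec n m v) (s : ℝ)
    (hs : s ∈ Set.Icc (0:ℝ) ((m:ℝ)/(n:ℝ))) :
    (((Finset.univ.filter (fun ℓ => ¬ 0 < E.q ℓ s)).card : ℕ) : ℝ) ≤ n * s := by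
  classical
  set D := Finset.univ.filter (fun ℓ => ¬ 0 < E.q ℓ s) with hD
  have hint : ∀ j : Fin m, IntervalIntegrable (fun t => ∑ i, E.c i j t) volume 0 s := by
    intro j
    have h1 : IntervalIntegrable (fun t => ∑ i, E.c i j t) volume 0 ((m:ℝ)/(n:ℝ)) := by
      have := IntervalIntegrable.sum Finset.univ (f := fun i => E.c i j)
        (fun i _ => E.c_integrable i j)
      convert this using 1
      · rfl
      ext t
      simp
    refine h1.mono_set ?_
    rw [Set.uIcc_of_le hs.1, Set.uIcc_of_le (le_trans hs.1 hs.2)]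
    exact Set.Icc_subset_Icc le_rfl hs.2
  have h1 : ∀ ℓ ∈ D, (1:ℝ) = ∫ t in (0:ℝ)..s, ∑ i, E.c i ℓ t := by
    intro ℓ hℓ
    simp only [hD, Finset.mem_filter, Finset.mem_univ, true_and] at hℓ
    have hq0 : E.q ℓ s = 0 := le_antisymm (not_lt.1 hℓ) (E.q_mem ℓ s hs).1
    have h2 := E.q_eq ℓ s hs
    rw [hq0] at h2; linarith
  calc (D.card : ℝ) = ∑ _ℓ ∈ D, (1:ℝ) := by simp
    _ = ∑ ℓ ∈ D, ∫ t in (0:ℝ)..s, ∑ i, E.c i ℓ t := Finset.sum_congr rfl h1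
    _ ≤ ∑ ℓ : Fin m, ∫ t in (0:ℝ)..s, ∑ i, E.c i ℓ t := by
        apply Finset.sum_le_sum_of_subset_of_nonneg (Finset.subset_univ _)
        intro j _ _
        exact intervalIntegral.integral_nonneg hs.1
          (fun u _ => Finset.sum_nonneg fun i _ => E.c_nonneg i j u)
    _ = ∫ t in (0:ℝ)..s, ∑ ℓ : Fin m, ∑ i, E.c i ℓ t :=
        (intervalIntegral.integral_finset_sum (fun j _ => hint j)).symm
    _ ≤ ∫ t in (0:ℝ)..s, (n:ℝ) := by
        apply intervalIntegral.integral_mono_on hs.1 ?_ intervalIntegrable_const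
        · intro t ht
          rw [Finset.sum_comm]
          calc ∑ i, ∑ ℓ, E.c i ℓ t ≤ ∑ _i : Fin n, (1:ℝ) :=
                Finset.sum_le_sum fun i _ => sum_c_le_one E i t ⟨ht.1, le_trans ht.2 hs.2⟩
            _ = n := by simp
        · have := IntervalIntegrable.sum Finset.univ
            (f := fun j : Fin m => fun t => ∑ i, E.c i j t) (fun j _ => hint j)
          convert this using 1
          · rfl
          ext t
          simp
    _ = n * s := by simp [mul_comm]

lemma payoff_ge {n : ℕ} (hn : 1 ≤ n) (u : Fin n → Fin n → ℝ) (v' : Fin n → Fin n → ℝ)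
    (i : Fin n) (σ : Equiv.Perm (Fin n))
    (hp0 : ∀ j, 0 ≤ v' i j) (hp1 : ∑ j, v' i j = 1)
    (hσ : ∀ a b : Fin n, a ≤ b → v' i (σ b) ≤ v' i (σ a))
    (hu : u i = gw σ)
    (E : CPSExec n n u) :
    1/(2*(n:ℝ)) ≤ E.payoff v' i := by
  classical
  have hn0 : (0:ℝ) < n := by exact_mod_cast hn
  have hT : ((n:ℕ):ℝ)/((n:ℕ):ℝ) = 1 := div_self hn0.ne'
  have hci : ∀ j, IntervalIntegrable (E.c i j) volume 0 1 := by
    intro j; have := E.c_integrable i j; rwa [hT] at this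
  set G : ℝ → ℝ := fun s => ∑ j, v' i j * E.c i j s with hG
  have hGint : ∀ a b : ℝ, 0 ≤ a → a ≤ b → b ≤ 1 → IntervalIntegrable G volume a b := by
    intro x y hx hxy hy1
    have h1 : IntervalIntegrable G volume 0 1 := by
      have := IntervalIntegrable.sum Finset.univ
        (f := fun j : Fin n => fun s => v' i j * E.c i j s)
        (fun j _ => (hci j).const_mul _)
      convert this using 1; · rfl
      ext t; simp [hG]
    exact h1.mono_set (by
      rw [Set.uIcc_of_le hxy, Set.uIcc_of_le (zero_le_one : (0:ℝ) ≤ 1)]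
      exact Set.Icc_subset_Icc hx hy1)
  have hpay : E.payoff v' i = ∫ s in (0:ℝ)..1, G s := by
    unfold CPSExec.payoff
    rw [hT]
    rw [intervalIntegral.integral_finset_sum
      (fun j _ => (hci j).const_mul (v' i j))]
    exact Finset.sum_congr rfl fun j _ => (intervalIntegral.integral_const_mul _ _).symm
  set a : ℕ → ℝ := fun k => (k:ℝ)/(n:ℝ) with ha
  have hak : ∀ k, k ≤ n → (0 ≤ a k ∧ a k ≤ 1) := by
    intro k hk
    constructor
    · positivity
    · rw [div_le_one hn0]; exact_mod_cast hk
  have hamono : ∀ k, a k ≤ a (k+1) := by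
    intro k
    show (k:ℝ)/(n:ℝ) ≤ ((k+1:ℕ):ℝ)/(n:ℝ)
    gcongr
    omega
  -- pointwise key bound on each subinterval
  have key : ∀ k (hk : k < n), ∀ s ∈ Set.Icc (a k) (a (k+1)), s ≠ a (k+1) →
      (2:ℝ)⁻¹ * v' i (σ ⟨k, hk⟩) ≤ G s := by
    intro k hk s hs hsne
    have hslt : s < a (k+1) := lt_of_le_of_ne hs.2 hsne
    have hs0 : 0 ≤ s := le_trans (hak k hk.le).1 hs.1
    have hs1le : s ≤ 1 := le_trans hslt.le (hak (k+1) hk).2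
    have hsIcc : s ∈ Set.Icc (0:ℝ) (((n:ℕ):ℝ)/((n:ℕ):ℝ)) := by
      rw [hT]; exact ⟨hs0, hs1le⟩
    -- dead items
    have hdead := dead_card_le E s hsIcc
    have hDk : (Finset.univ.filter (fun ℓ => ¬ 0 < E.q ℓ s)).card ≤ k := by
      have h2 : ((Finset.univ.filter (fun ℓ => ¬ 0 < E.q ℓ s)).card : ℝ) < (k:ℝ) + 1 := by
        have h3 : (n:ℝ) * s < (n:ℝ) * a (k+1) := mul_lt_mul_of_pos_left hslt hn0
        have h4 : (n:ℝ) * a (k+1) = (k:ℝ) + 1 := by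
          rw [ha]; push_cast; field_simp
        calc ((Finset.univ.filter (fun ℓ => ¬ 0 < E.q ℓ s)).card : ℝ)
            ≤ (n:ℝ) * s := hdead
          _ < (k:ℝ) + 1 := by rw [← h4]; exact h3
      exact_mod_cast Nat.lt_succ_iff.1 (by exact_mod_cast h2)
    -- alive items
    have hAne : (Finset.univ.filter (fun ℓ => 0 < E.q ℓ s)).Nonempty := by
      by_contra h
      rw [Finset.not_nonempty_iff_eq_empty] at h
      have hall : ∀ ℓ : Fin n, ¬ 0 < E.q ℓ s := by
        intro ℓ hℓ
        have : ℓ ∈ Finset.univ.filter (fun ℓ => 0 < E.q ℓ s) :=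
          Finset.mem_filter.2 ⟨Finset.mem_univ _, hℓ⟩
        simp [h] at this
      have : (Finset.univ.filter (fun ℓ => ¬ 0 < E.q ℓ s)) = Finset.univ := by
        apply Finset.filter_true_of_mem
        intro ℓ _; exact hall ℓ
      rw [this, Finset.card_univ, Fintype.card_fin] at hDk
      omega
    obtain ⟨b0, hb0, hmin⟩ :=
      Finset.exists_min_image (Finset.univ.filter (fun ℓ => 0 < E.q ℓ s))
        (fun ℓ => σ.symm ℓ) hAne
    -- σ.symm b0 ≤ ⟨k, hk⟩
    have hrk : σ.symm b0 ≤ (⟨k, hk⟩ : Fin n) := by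
      by_contra hlt
      push_neg at hlt
      have hsub : (Finset.Iic ((⟨k, hk⟩ : Fin n))).image σ ⊆
          Finset.univ.filter (fun ℓ => ¬ 0 < E.q ℓ s) := by
        intro x hx
        rcases Finset.mem_image.1 hx with ⟨j, hj, rfl⟩
        simp only [Finset.mem_Iic] at hj
        refine Finset.mem_filter.2 ⟨Finset.mem_univ _, ?_⟩
        intro hq
        have hxA : σ j ∈ Finset.univ.filter (fun ℓ => 0 < E.q ℓ s) :=
          Finset.mem_filter.2 ⟨Finset.mem_univ _, hq⟩
        have h5 := hmin (σ j) hxA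
        rw [Equiv.symm_apply_apply] at h5
        exact absurd (lt_of_le_of_lt (h5.trans hj) hlt) (lt_irrefl _)
      have hc1 := Finset.card_le_card hsub
      rw [Finset.card_image_of_injective _ σ.injective, Fin.card_Iic] at hc1
      simp only at hc1
      omega
    have hb0val : v' i (σ (⟨k, hk⟩ : Fin n)) ≤ v' i b0 := by
      have h6 := hσ (σ.symm b0) ⟨k, hk⟩ hrk
      rwa [Equiv.apply_symm_apply] at h6
    -- consumption bound
    have hminv : ∀ ℓ ∈ Finset.univ.filter (fun ℓ => 0 < E.q ℓ s), σ.symm b0 ≤ σ.symm ℓ :=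
      hmin
    have hsumA_le : ∑ ℓ ∈ Finset.univ.filter (fun ℓ => 0 < E.q ℓ s), u i ℓ ≤ 2 * u i b0 := by
      rw [hu]; exact gw_tail hn σ _ b0 hb0 hminv
    have hub0 : 0 < u i b0 := by rw [hu]; exact gw_pos hn σ b0
    have hsumA_pos : 0 < ∑ ℓ ∈ Finset.univ.filter (fun ℓ => 0 < E.q ℓ s), u i ℓ :=
      lt_of_lt_of_le hub0 (Finset.single_le_sum
        (fun ℓ _ => by rw [hu]; exact (gw_pos hn σ ℓ).le) hb0)
    have hqb0 : 0 < E.q b0 s := (Finset.mem_filter.1 hb0).2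
    have hcprop := E.c_prop i b0 s hsIcc hqb0 hsumA_pos
    have hcb : (2:ℝ)⁻¹ ≤ E.c i b0 s := by
      rw [hcprop]
      have h7 : u i b0 / (2 * u i b0) = 2⁻¹ := by
        rw [mul_comm, ← div_div, div_self hub0.ne']
        norm_num
      calc (2:ℝ)⁻¹ = u i b0 / (2 * u i b0) := h7.symm
        _ ≤ u i b0 / ∑ ℓ ∈ Finset.univ.filter (fun ℓ => 0 < E.q ℓ s), u i ℓ :=
          div_le_div_of_nonneg_left hub0.le hsumA_pos hsumA_le
    have hGs : v' i b0 * E.c i b0 s ≤ G s :=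
      Finset.single_le_sum
        (fun j _ => mul_nonneg (hp0 j) (E.c_nonneg i j s)) (Finset.mem_univ b0)
    have h8 : (2:ℝ)⁻¹ * v' i (σ ⟨k, hk⟩) ≤ v' i b0 * E.c i b0 s := by
      have h9 : (2:ℝ)⁻¹ * v' i (σ ⟨k, hk⟩) ≤ (2:ℝ)⁻¹ * v' i b0 := by
        nlinarith
      have h10 : (2:ℝ)⁻¹ * v' i b0 ≤ v' i b0 * E.c i b0 s := by
        nlinarith [hp0 b0]
      linarith
    linarith
  -- per-piece integral bound
  set B : ℕ → ℝ := fun k => if h : k < n then (2:ℝ)⁻¹ * v' i (σ ⟨k, h⟩) / (n:ℝ) else 0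
    with hB
  have hpiece : ∀ k ∈ Finset.range n, B k ≤ ∫ s in a k..a (k+1), G s := by
    intro k hkr
    have hk := Finset.mem_range.1 hkr
    have hint : IntervalIntegrable G volume (a k) (a (k+1)) :=
      hGint _ _ (hak k hk.le).1 (hamono k) (hak (k+1) hk).2
    have hae : (fun _ : ℝ => (2:ℝ)⁻¹ * v' i (σ ⟨k, hk⟩)) ≤ᵐ[volume.restrict
        (Set.Icc (a k) (a (k+1)))] G := by
      have h1 : ∀ᵐ x ∂(volume.restrict (Set.Icc (a k) (a (k+1)))), x ≠ a (k+1) := by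
        rw [ae_iff]
        have h0 : {x : ℝ | ¬ x ≠ a (k+1)} = {a (k+1)} := by ext x; simp
        rw [h0, Measure.restrict_apply (measurableSet_singleton _)]
        exact le_antisymm (le_trans (measure_mono Set.inter_subset_left) (by simp))
          (zero_le)
      have h2 : ∀ᵐ x ∂(volume.restrict (Set.Icc (a k) (a (k+1)))),
          x ∈ Set.Icc (a k) (a (k+1)) := ae_restrict_mem measurableSet_Icc
      filter_upwards [h1, h2] with x hx1 hx2
      exact key k hk x hx2 hx1
    have hmono := intervalIntegral.integral_mono_ae_restrict (hamono k)
      intervalIntegrable_const hint hae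
    rw [intervalIntegral.integral_const, smul_eq_mul] at hmono
    have hgap : a (k+1) - a k = 1/(n:ℝ) := by
      rw [ha]; push_cast; field_simp; ring
    rw [hgap] at hmono
    have heq : (1/(n:ℝ)) * ((2:ℝ)⁻¹ * v' i (σ ⟨k, hk⟩)) =
        (2:ℝ)⁻¹ * v' i (σ ⟨k, hk⟩) / (n:ℝ) := by ring
    rw [heq] at hmono
    rw [hB]
    simp only []
    rw [dif_pos hk]
    exact hmono
  have hsplit : ∑ k ∈ Finset.range n, ∫ s in a k..a (k+1), G s
      = ∫ s in (0:ℝ)..1, G s := by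
    have h := intervalIntegral.sum_integral_adjacent_intervals (a := a) (n := n)
      (f := G) (μ := volume)
      (fun k hk => hGint _ _ (hak k hk.le).1 (hamono k) (hak (k+1) hk).2)
    have h0 : a 0 = 0 := by simp only [ha]; simp
    have h1 : a n = 1 := by simp only [ha]; exact hT
    rw [h0, h1] at h
    exact h
  have hBsum : ∑ k ∈ Finset.range n, B k = 1/(2*(n:ℝ)) := by
    rw [← Fin.sum_univ_eq_sum_range B n]
    have hBj : ∀ j : Fin n, B (j:ℕ) = (2:ℝ)⁻¹ * v' i (σ j) / (n:ℝ) := by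
      intro j
      rw [hB]
      simp only []
      rw [dif_pos j.isLt]
    rw [Finset.sum_congr rfl (fun j _ => hBj j)]
    rw [← Finset.sum_div, ← Finset.mul_sum]
    rw [Equiv.sum_comp σ (v' i), hp1]
    ring
  calc 1/(2*(n:ℝ)) = ∑ k ∈ Finset.range n, B k := hBsum.symm
    _ ≤ ∑ k ∈ Finset.range n, ∫ s in a k..a (k+1), G s := Finset.sum_le_sum hpiece
    _ = ∫ s in (0:ℝ)..1, G s := hsplit
    _ = E.payoff v' i := hpay.symm

end CPSAux

/-- **Equilibrium welfare is at least `1/4` in the symmetric case.**  Let `m = n`, let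
`v'` be unit-sum true valuations, and let `v` (with execution `E`) be a pure Nash
equilibrium of CPS with respect to `v'`.  Then every agent's payoff is at least `1/(4n)`,
and hence the social welfare of every pure Nash equilibrium is at least `1/4`. -/
theorem cps_equilibrium_welfare_quarter (n : ℕ) (hn : 1 ≤ n) (v' v : Fin n → Fin n → ℝ)
    (hv' : ∀ i, IsUnitSum (v' i)) (hv : ∀ i, IsUnitSum (v i))
    (E : CPSExec n n v) (hNE : IsCPSNash v' v E) :
    (∀ i, 1 / (4 * (n : ℝ)) ≤ E.payoff v' i) ∧ (1 / 4 : ℝ) ≤ ∑ i, E.payoff v' i := by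
  classical
  have hn0 : (0:ℝ) < n := by exact_mod_cast hn
  have main : ∀ i : Fin n, 1/(2*(n:ℝ)) ≤ E.payoff v' i := by
    intro i
    set σ : Equiv.Perm (Fin n) := Tuple.sort (fun j => -(v' i j)) with hσdef
    have hσ : ∀ a b : Fin n, a ≤ b → v' i (σ b) ≤ v' i (σ a) := by
      intro a b hab
      have h := Tuple.monotone_sort (fun j => -(v' i j)) hab
      simp only [Function.comp] at h
      have h' : -(v' i (σ a)) ≤ -(v' i (σ b)) := h
      linarith
    have hw : IsUnitSum (CPSAux.gw σ) :=
      ⟨fun ℓ => (CPSAux.gw_pos hn σ ℓ).le, CPSAux.gw_sum hn σ⟩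
    obtain ⟨E', hE'⟩ := hNE i (CPSAux.gw σ) hw
    have hu : (Function.update v i (CPSAux.gw σ)) i = CPSAux.gw σ :=
      Function.update_self i _ v
    have h1 := CPSAux.payoff_ge hn _ v' i σ (hv' i).1 (hv' i).2 hσ hu E'
    linarith
  constructor
  · intro i
    have h := main i
    have h2 : 1/(4*(n:ℝ)) ≤ 1/(2*(n:ℝ)) := by
      apply one_div_le_one_div_of_le (by positivity) (by linarith)
    linarith
  · have h3 := Finset.sum_le_sum (fun i (_ : i ∈ Finset.univ) => main i)
    have h4 : ∑ _i : Fin n, 1/(2*(n:ℝ)) = (n:ℝ) * (1/(2*(n:ℝ))) := by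
      rw [Finset.sum_const, Finset.card_univ, Fintype.card_fin, nsmul_eq_mul]
    have h5 : (n:ℝ) * (1/(2*(n:ℝ))) = 1/2 := by field_simp
    rw [h4, h5] at h3
    linarith
end
end

section
/- (Combinatorial grouping lower bound.) Let N ≥ 1 and let X_1, X_2, …, X_K be pairwise disjoint nonempty subsets of {1,…,N}. For each i, let r_i = min over 1 ≤ ℓ ≤ |X_i| of (s_i(ℓ)/ℓ), where s_i(ℓ) denotes the ℓ-th smallest element of X_i. Then ∑_{i=1}^K r_i ≥ K² / (4·(⌊log₂ N⌋ + 1)). -/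
/-- For a finite nonempty set `X` of positive integers, `minRatio X` is the minimum over
`1 ≤ ℓ ≤ |X|` of `s(ℓ)/ℓ`, where `s(ℓ)` is the `ℓ`-th smallest element of `X`. -/
noncomputable def minRatio (X : Finset ℕ) : ℝ :=
  sInf ((fun ℓ : ℕ => (((X.sort (· ≤ ·)).getD (ℓ - 1) 0 : ℕ) : ℝ) / (ℓ : ℝ)) ''
    Set.Icc 1 X.card)

open Finset in

lemma minRatio_attained (X : Finset ℕ) (h : X.Nonempty) :
    ∃ ℓ, 1 ≤ ℓ ∧ ℓ ≤ X.card ∧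
      minRatio X = (((X.sort (· ≤ ·)).getD (ℓ - 1) 0 : ℕ) : ℝ) / (ℓ : ℝ) := by
  have hfin : ((fun ℓ : ℕ => (((X.sort (· ≤ ·)).getD (ℓ - 1) 0 : ℕ) : ℝ) / (ℓ : ℝ)) ''
      Set.Icc 1 X.card).Finite := (Set.finite_Icc 1 X.card).image _
  have hne : ((fun ℓ : ℕ => (((X.sort (· ≤ ·)).getD (ℓ - 1) 0 : ℕ) : ℝ) / (ℓ : ℝ)) ''
      Set.Icc 1 X.card).Nonempty := by
    refine Set.Nonempty.image _ ⟨1, ?_⟩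
    exact Set.mem_Icc.mpr ⟨le_refl 1, Finset.card_pos.mpr h⟩
  have := hne.csInf_mem hfin
  obtain ⟨ℓ, hℓ, he⟩ := this
  exact ⟨ℓ, hℓ.1, hℓ.2, he.symm⟩

lemma minRatio_nonneg (X : Finset ℕ) (h : X.Nonempty) : 0 ≤ minRatio X := by
  obtain ⟨ℓ, _, _, he⟩ := minRatio_attained X h
  rw [he]; positivity

lemma card_le_filter (X : Finset ℕ) {ℓ : ℕ} (h1 : 1 ≤ ℓ) (h2 : ℓ ≤ X.card) :
    ℓ ≤ (X.filter (· ≤ (X.sort (· ≤ ·)).getD (ℓ - 1) 0)).card := by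
  set l := X.sort (· ≤ ·) with hl
  have hlen : l.length = X.card := X.length_sort _
  have hlt : ℓ - 1 < l.length := by omega
  have hs : l.getD (ℓ - 1) 0 = l.get ⟨ℓ - 1, hlt⟩ := List.getD_eq_getElem l 0 hlt
  have hsub : (l.take ℓ).toFinset ⊆ X.filter (· ≤ l.getD (ℓ - 1) 0) := by
    intro x hx
    rw [List.mem_toFinset] at hx
    obtain ⟨k, hk, rfl⟩ := List.getElem_of_mem hx
    have hk' : k < ℓ := lt_of_lt_of_le hk (by simp [List.length_take])
    have hkl : k < l.length := by omega
    rw [List.getElem_take]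
    rw [Finset.mem_filter]
    constructor
    · exact (Finset.mem_sort _).mp (List.getElem_mem hkl)
    · rw [hs]
      exact (X.pairwise_sort (· ≤ ·)).rel_get_of_le (a := ⟨k, hkl⟩) (b := ⟨ℓ-1, hlt⟩)
        (by simp; omega)
  calc ℓ = (l.take ℓ).toFinset.card := by
        rw [List.toFinset_card_of_nodup ((List.take_sublist _ _).nodup (X.sort_nodup _))]
        simp [List.length_take]; omega
    _ ≤ _ := Finset.card_le_card hsub

open Finset in
private lemma counting (N : ℕ) (K : ℕ) (X : Fin K → Finset ℕ)
    (hsub : ∀ i, X i ⊆ Finset.Icc 1 N)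
    (hne : ∀ i, (X i).Nonempty)
    (hdisj : ∀ i i', i ≠ i' → Disjoint (X i) (X i'))
    (t : ℝ) (ht : 0 ≤ t) (S : Finset (Fin K))
    (hr : ∀ i ∈ S, minRatio (X i) ≤ t) :
    (S.card : ℝ) ≤ 2 * t * ((Nat.log 2 N : ℝ) + 1) := by
  set L := Nat.log 2 N + 1 with hL
  choose ℓ h1 h2 h3 using fun i => minRatio_attained (X i) (hne i)
  set s : Fin K → ℕ := fun i => ((X i).sort (· ≤ ·)).getD (ℓ i - 1) 0 with hs
  -- each J i lies in range L
  have hJ : ∀ i ∈ S, Nat.log 2 (ℓ i) ∈ Finset.range L := by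
    intro i _
    rw [Finset.mem_range, hL, Nat.lt_succ_iff]
    apply Nat.log_mono_right
    calc ℓ i ≤ (X i).card := h2 i
      _ ≤ (Finset.Icc 1 N).card := Finset.card_le_card (hsub i)
      _ = N := by rw [Nat.card_Icc]; omega
  -- pigeonhole
  have hsum : S.card = ∑ j ∈ Finset.range L, (S.filter fun i => Nat.log 2 (ℓ i) = j).card :=
    Finset.card_eq_sum_card_fiberwise hJ
  have hLpos : 0 < L := Nat.succ_pos _
  obtain ⟨j, hj, hfib⟩ : ∃ j ∈ Finset.range L,
      S.card ≤ L * (S.filter fun i => Nat.log 2 (ℓ i) = j).card := by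
    apply Finset.exists_le_of_sum_le (Finset.nonempty_range_iff.mpr hLpos.ne')
    rw [← Finset.mul_sum, ← hsum, Finset.sum_const, Finset.card_range, smul_eq_mul]
  set T := S.filter fun i => Nat.log 2 (ℓ i) = j with hT
  -- counting in T
  have hkey : (T.card : ℝ) * 2 ^ j ≤ t * 2 ^ (j + 1) := by
    set B := Finset.Icc 1 (Nat.floor (t * 2 ^ (j + 1))) with hB
    have hsubB : ∀ i ∈ T, (X i).filter (· ≤ s i) ⊆ B := by
      intro i hi x hx
      rw [Finset.mem_filter] at hx
      obtain ⟨hxX, hxs⟩ := hx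
      have hx1 : 1 ≤ x := (Finset.mem_Icc.mp (hsub i hxX)).1
      rw [hT, Finset.mem_filter] at hi
      have hℓlt : ℓ i < 2 ^ (j + 1) := by
        rw [← hi.2]; exact Nat.lt_pow_succ_log_self one_lt_two _
      have hsle : (s i : ℝ) ≤ t * ℓ i := by
        have := hr i hi.1
        rw [h3 i] at this
        have hℓpos : (0:ℝ) < ℓ i := by exact_mod_cast h1 i
        calc (s i : ℝ) = (s i : ℝ) / ℓ i * ℓ i := by field_simp
          _ ≤ t * ℓ i := by exact mul_le_mul_of_nonneg_right this (le_of_lt hℓpos)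
      have : (x : ℝ) ≤ t * 2 ^ (j + 1) := by
        calc (x : ℝ) ≤ (s i : ℝ) := by exact_mod_cast hxs
          _ ≤ t * ℓ i := hsle
          _ ≤ t * 2 ^ (j + 1) := by
              apply mul_le_mul_of_nonneg_left _ ht
              exact_mod_cast hℓlt.le
      exact Finset.mem_Icc.mpr ⟨hx1, Nat.le_floor this⟩
    have hdisjf : ∀ i ∈ T, ∀ i' ∈ T, i ≠ i' →
        Disjoint ((X i).filter (· ≤ s i)) ((X i').filter (· ≤ s i')) := fun i _ i' _ h =>
      (hdisj i i' h).mono (Finset.filter_subset _ _) (Finset.filter_subset _ _)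
    have hnat : T.card * 2 ^ j ≤ Nat.floor (t * 2 ^ (j + 1)) := by
      calc T.card * 2 ^ j = ∑ i ∈ T, 2 ^ j := by rw [Finset.sum_const, smul_eq_mul, mul_comm]
        _ ≤ ∑ i ∈ T, ((X i).filter (· ≤ s i)).card := by
            apply Finset.sum_le_sum
            intro i hi
            rw [hT, Finset.mem_filter] at hi
            calc 2 ^ j = 2 ^ Nat.log 2 (ℓ i) := by rw [hi.2]
              _ ≤ ℓ i := Nat.pow_log_le_self 2 (by have := h1 i; omega)
              _ ≤ _ := card_le_filter (X i) (h1 i) (h2 i)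
        _ = (T.biUnion fun i => (X i).filter (· ≤ s i)).card :=
            (Finset.card_biUnion hdisjf).symm
        _ ≤ B.card := Finset.card_le_card (Finset.biUnion_subset.mpr hsubB)
        _ ≤ Nat.floor (t * 2 ^ (j + 1)) := by rw [hB, Nat.card_Icc]; omega
    calc (T.card : ℝ) * 2 ^ j = ((T.card * 2 ^ j : ℕ) : ℝ) := by push_cast; ring
      _ ≤ (Nat.floor (t * 2 ^ (j + 1)) : ℝ) := by exact_mod_cast hnat
      _ ≤ t * 2 ^ (j + 1) := Nat.floor_le (by positivity)
  -- conclude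
  have hm : (T.card : ℝ) ≤ 2 * t := by
    have h2j : (0:ℝ) < 2 ^ j := by positivity
    rw [pow_succ] at hkey
    nlinarith
  calc (S.card : ℝ) ≤ (L : ℝ) * T.card := by exact_mod_cast hfib
    _ ≤ (L : ℝ) * (2 * t) := by
        apply mul_le_mul_of_nonneg_left hm (by positivity)
    _ = 2 * t * ((Nat.log 2 N : ℝ) + 1) := by rw [hL]; push_cast; ring

open Finset in
private lemma key (N : ℕ) (K : ℕ) (X : Fin K → Finset ℕ)
    (hsub : ∀ i, X i ⊆ Finset.Icc 1 N)
    (hne : ∀ i, (X i).Nonempty)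
    (hdisj : ∀ i i', i ≠ i' → Disjoint (X i) (X i'))
    (S : Finset (Fin K)) :
    (S.card : ℝ) ^ 2 / (4 * ((Nat.log 2 N : ℝ) + 1)) ≤ ∑ i ∈ S, minRatio (X i) := by
  set L : ℝ := (Nat.log 2 N : ℝ) + 1 with hLd
  have hL : (0:ℝ) < L := by positivity
  induction S using Finset.strongInduction with
  | _ S ih =>
    rcases S.eq_empty_or_nonempty with rfl | hS
    · simp
    obtain ⟨i₀, hi₀, hti₀⟩ := Finset.exists_mem_eq_sup' hS (fun i => minRatio (X i))
    set t := S.sup' hS fun i => minRatio (X i) with htd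
    have ht0 : 0 ≤ t := hti₀ ▸ minRatio_nonneg _ (hne i₀)
    have hr : ∀ i ∈ S, minRatio (X i) ≤ t := fun i hi => Finset.le_sup' (fun i => minRatio (X i)) hi
    have hcard : (S.card : ℝ) ≤ 2 * t * L := counting N K X hsub hne hdisj t ht0 S hr
    have hsum : ∑ i ∈ S, minRatio (X i)
        = minRatio (X i₀) + ∑ i ∈ S.erase i₀, minRatio (X i) :=
      (Finset.add_sum_erase S _ hi₀).symm
    have hIH := ih (S.erase i₀) (Finset.erase_ssubset hi₀)
    have hce : ((S.erase i₀).card : ℝ) = (S.card : ℝ) - 1 := by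
      rw [Finset.card_erase_of_mem hi₀]
      have : 1 ≤ S.card := Finset.card_pos.mpr hS
      push_cast [Nat.cast_sub this]
      ring
    rw [hce] at hIH
    rw [hsum, ← hti₀]
    have hc1 : (1:ℝ) ≤ (S.card : ℝ) := by exact_mod_cast Finset.card_pos.mpr hS
    have halg : (S.card : ℝ) ^ 2 / (4 * L) ≤ t + ((S.card : ℝ) - 1) ^ 2 / (4 * L) := by
      rw [div_le_iff₀ (by positivity)]
      have h1 : (((S.card:ℝ)-1)^2 / (4*L)) * (4*L) = ((S.card:ℝ)-1)^2 := by field_simp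
      nlinarith [hIH, hcard, h1]
    exact le_trans halg (by linarith)

/-- **Combinatorial grouping lower bound.**  Let `X 1, …, X K` be pairwise disjoint
nonempty subsets of `{1,…,N}` and for each `i` let `r i = min_{1 ≤ ℓ ≤ |X i|} s_i(ℓ)/ℓ`
(where `s_i(ℓ)` is the `ℓ`-th smallest element of `X i`).  Then
`∑ i, r i ≥ K² / (4·(⌊log₂ N⌋ + 1))`. -/
theorem grouping_lower_bound (N : ℕ) (hN : 1 ≤ N) (K : ℕ)
    (X : Fin K → Finset ℕ)
    (hsub : ∀ i, X i ⊆ Finset.Icc 1 N)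
    (hne : ∀ i, (X i).Nonempty)
    (hdisj : ∀ i i', i ≠ i' → Disjoint (X i) (X i')) :
    (K : ℝ) ^ 2 / (4 * ((Nat.log 2 N : ℝ) + 1)) ≤ ∑ i, minRatio (X i) := by
  have := key N K X hsub hne hdisj Finset.univ
  simpa using this
end
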